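/- arXiv:2509.18724 — 2 statements merged into one kernel-verified Lean document; each statement's English description precedes it below -/
import Mathlib

section
/- Let S be a finite commutative Clifford semigroup and K a field such that either (i) K is a splitting field of S, or (ii) K has characteristic p and exp(S) is a power of the prime p. Then for each a ∈ S the cyclic subsemigroup ⟨a⟩ is a group, the Green class H_a is a maximal subgroup of S containing a, and Γ(H_a) ≅ H_a. In particular d(S,K) = max_{a∈S} d(Γ(H_a),K) = max_H d(H,K), where H ranges over all subgroups of S. -/
namespace ZS

variable (S : Type*) [AddCommSemigroup S]

/-- `nsmul' n x = (n+1)·x`, iterated addition in a semigroup. -/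
def nsmul' : ℕ → S → S
  | 0, x => x
  | n + 1, x => x + nsmul' n x

/-- The cyclic subsemigroup `⟨x⟩ = {x, 2x, 3x, …}` generated by `x`. -/
def cyc (x : S) : Set S := Set.range fun n => nsmul' S n x

/-- `x` is periodic if `⟨x⟩` is finite. -/
def IsPeriodicElem (x : S) : Prop := (cyc S x).Finite

/-- A semigroup is periodic if every element is periodic. -/
def IsPeriodicSemigroup : Prop := ∀ x : S, IsPeriodicElem S x

/-- `ρ(x)`: the least `m ≥ 1` such that `m·x` is idempotent (equivalently `m·x = e(x)`). -/
noncomputable def rho (x : S) : ℕ :=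
  sInf {n : ℕ | nsmul' S n x + nsmul' S n x = nsmul' S n x} + 1

/-- `e(x)`: the unique idempotent of the finite cyclic semigroup `⟨x⟩`. -/
noncomputable def eIdem (x : S) : S :=
  nsmul' S (sInf {n : ℕ | nsmul' S n x + nsmul' S n x = nsmul' S n x}) x

/-- The period of a (periodic) element `x`: the least `n > 0` with `(m+n)x = mx` for some `m`. -/
noncomputable def period (x : S) : ℕ :=
  sInf {n : ℕ | 0 < n ∧ ∃ m : ℕ, nsmul' S (m + n) x = nsmul' S m x}

/-- The index of a (periodic) element `x`: the least `k ≥ 1` with `kx = tx` for some `t ≠ k`. -/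
noncomputable def indexOf (x : S) : ℕ :=
  sInf {k : ℕ | ∃ t : ℕ, t ≠ k ∧ nsmul' S k x = nsmul' S t x} + 1

/-- `exp(S)`: the lcm of the periods of the elements of `S`, described as the least positive
common multiple of all the periods. -/
noncomputable def expS : ℕ := sInf {n : ℕ | 0 < n ∧ ∀ x : S, period S x ∣ n}

/-- `K` is a splitting field for exponent `n`: it contains exactly `n` `n`-th roots of unity. -/
def SplitField (K : Type*) [Field K] (n : ℕ) : Prop := Set.ncard {ζ : K | ζ ^ n = 1} = n

/-- Green's preorder `a ≼_𝓗 b`. -/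
def gLe (a b : S) : Prop := a = b ∨ ∃ c : S, a = b + c

/-- Green's congruence `a 𝓗 b`. -/
def gEq (a b : S) : Prop := gLe S a b ∧ gLe S b a

/-- `a ≺_𝓗 b`. -/
def gLt (a b : S) : Prop := gLe S a b ∧ ¬ gLe S b a

/-- The Green class `H_a`. -/
def HClass (a : S) : Set S := {x : S | gEq S x a}

/-- The stabilizer `St(H_a)` of the Green class of `a`. -/
def stab (a : S) : Set S := {c : S | ∀ x ∈ HClass S a, c + x ∈ HClass S a}

theorem gLe_trans {a b c : S} (h1 : gLe S a b) (h2 : gLe S b c) : gLe S a c := by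
  rcases h1 with rfl | ⟨u, rfl⟩
  · exact h2
  · rcases h2 with rfl | ⟨v, rfl⟩
    · exact Or.inr ⟨u, rfl⟩
    · exact Or.inr ⟨v + u, by rw [add_assoc]⟩

theorem gLe_add_right {a b : S} (x : S) (h : gLe S a b) : gLe S (a + x) (b + x) := by
  rcases h with rfl | ⟨c, rfl⟩
  · exact Or.inl rfl
  · exact Or.inr ⟨c, by rw [add_right_comm]⟩

theorem gEq_add {w x y z : S} (h1 : gEq S w x) (h2 : gEq S y z) : gEq S (w + y) (x + z) := by
  have k1 : gLe S (w + y) (x + y) := gLe_add_right S y h1.1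
  have k2 : gLe S (x + y) (x + z) := by
    have h := gLe_add_right S x h2.1
    rwa [add_comm z x, add_comm y x] at h
  have k3 : gLe S (x + z) (w + z) := gLe_add_right S z h1.2
  have k4 : gLe S (w + z) (w + y) := by
    have h := gLe_add_right S w h2.2
    rwa [add_comm z w, add_comm y w] at h
  exact ⟨gLe_trans S k1 k2, gLe_trans S k3 k4⟩

/-- Green's congruence as an additive congruence. -/
def greenCon : AddCon S where
  r a b := gEq S a b
  iseqv := ⟨fun _ => ⟨Or.inl rfl, Or.inl rfl⟩, fun h => ⟨h.2, h.1⟩,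
    fun h1 h2 => ⟨gLe_trans S h1.1 h2.1, gLe_trans S h2.2 h1.2⟩⟩
  add' h1 h2 := gEq_add S h1 h2

/-- The quotient semigroup `S/𝓗`. -/
abbrev GQuot := (greenCon S).Quotient

/-- The canonical epimorphism `S → S/𝓗`, `a ↦ ā`. -/
def gq (a : S) : GQuot S := (a : (greenCon S).Quotient)

/-- The sum of a sequence (multiset) of elements of `S`, computed in `WithZero S`
(the empty sequence having sum the adjoined zero). -/
def msum (T : Multiset S) : WithZero S := (T.map fun x => (x : WithZero S)).sum

/-- A sequence over a commutative semigroup is (additively) reducible if some proper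
(possibly empty) subsequence has the same sum; the empty sequence has sum the identity of `S`,
when `S` has one. -/
def IsReducible (T : Multiset S) : Prop :=
  (∃ T' : Multiset S, T' ≤ T ∧ T' ≠ T ∧ T' ≠ 0 ∧ msum S T' = msum S T) ∨
    (T ≠ 0 ∧ ∃ z : S, msum S T = ↑z ∧ ∀ s : S, z + s = s)

/-- The Davenport constant `D(S)` of a commutative semigroup. -/
noncomputable def Dav : ℕ∞ :=
  sInf {n : ℕ∞ | ∀ T : Multiset S, (T.card : ℕ∞) ≥ n → IsReducible S T}

/-- The relative Davenport constant `D_a(S)`: the largest length of an additively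
irreducible sequence with sum `a`. -/
noncomputable def Drel (a : S) : ℕ∞ :=
  sSup {n : ℕ∞ | ∃ T : Multiset S,
    T ≠ 0 ∧ ¬ IsReducible S T ∧ msum S T = ↑a ∧ n = (T.card : ℕ∞)}

/-- The Erdős–Burgess constant `I(S)`: the smallest `ℓ` such that every sequence over `S` of
length (at least) `ℓ` has a nonempty subsequence with idempotent sum. -/
noncomputable def EB : ℕ∞ :=
  sInf {n : ℕ∞ | ∀ T : Multiset S, (T.card : ℕ∞) ≥ n →
    ∃ T' : Multiset S, T' ≤ T ∧ T' ≠ 0 ∧ ∃ x : S, msum S T' = ↑x ∧ x + x = x}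

/-- The Davenport constant of a (semigroup which is a) group: the smallest `ℓ` such that every
sequence of length (at least) `ℓ` has a nonempty subsequence whose sum is the identity element. -/
noncomputable def DavGrpSet : ℕ∞ :=
  sInf {n : ℕ∞ | ∀ T : Multiset S, (T.card : ℕ∞) ≥ n →
    ∃ T' : Multiset S, T' ≤ T ∧ T' ≠ 0 ∧ ∃ z : S, msum S T' = ↑z ∧ ∀ x : S, z + x = x}

/-- The Davenport constant of a finite abelian group. -/
noncomputable def DavG (G : Type*) [AddCommMonoid G] : ℕ∞ :=
  sInf {n : ℕ∞ | ∀ T : Multiset G, (T.card : ℕ∞) ≥ n →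
    ∃ T' : Multiset G, T' ≤ T ∧ T' ≠ 0 ∧ T'.sum = 0}

/-- `ψ(a)`: the largest length of a strictly ascending chain of principal ideals starting at
`(a)`. -/
noncomputable def psi (a : S) : ℕ∞ :=
  sSup {n : ℕ∞ | ∃ ℓ : ℕ, n = (ℓ : ℕ∞) ∧
    ∃ c : ℕ → S, c 0 = a ∧ ∀ i < ℓ, gLt S (c i) (c (i + 1))}

/-- `Ψ(S)`: the largest length of a strictly ascending chain of principal ideals of `S`. -/
noncomputable def PsiS : ℕ∞ := ⨆ a : S, psi S a

/-- A subset of a semigroup which is a subgroup: closed under addition, with an identity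
and inverses. -/
def IsSubgroupSet (T : Set S) : Prop :=
  (∀ x ∈ T, ∀ y ∈ T, x + y ∈ T) ∧
    ∃ z ∈ T, (∀ x ∈ T, z + x = x) ∧ ∀ x ∈ T, ∃ y ∈ T, x + y = z

open Classical in
/-- `ε_a`: `0` if `⟨a⟩` is a group, `1` otherwise. -/
noncomputable def eps (a : S) : ℕ∞ := if IsSubgroupSet S (cyc S a) then 0 else 1

/-- The Schützenberger maps on the Green class `H_a`: maps `x ↦ c + x` for `c ∈ St(H_a)`. -/
def GammaSet (a : S) : Set (↥(HClass S a) → ↥(HClass S a)) :=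
  {f | ∃ c ∈ stab S a, ∀ x : ↥(HClass S a), (↑(f x) : S) = c + ↑x}

/-- The Schützenberger group `Γ(H_a)` (as a type; it is empty when `St(H_a) = ∅`). -/
def Gamma (a : S) : Type _ := ↥(GammaSet S a)

instance (a : S) : Add (Gamma S a) :=
  ⟨fun f g => ⟨f.1 ∘ g.1, by
    obtain ⟨c, hc, hfc⟩ := f.2
    obtain ⟨d, hd, hgd⟩ := g.2
    refine ⟨c + d, fun x hx => by rw [add_assoc]; exact hc _ (hd x hx), fun x => ?_⟩
    show (↑(f.1 (g.1 x)) : S) = c + d + ↑x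
    rw [hfc (g.1 x), hgd x, add_assoc]⟩⟩

instance (a : S) : AddCommSemigroup (Gamma S a) where
  add_assoc f g h := Subtype.ext rfl
  add_comm f g := by
    obtain ⟨c, hc, hfc⟩ := f.2
    obtain ⟨d, hd, hgd⟩ := g.2
    apply Subtype.ext
    funext x
    apply Subtype.ext
    show (↑(f.1 (g.1 x)) : S) = ↑(g.1 (f.1 x))
    rw [hfc (g.1 x), hgd x, hgd (f.1 x), hfc x, add_left_comm]

/-- `St(H_a)` as a subsemigroup of `S`. -/
def stabSub (a : S) : AddSubsemigroup S where
  carrier := stab S a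
  add_mem' := fun {c d} hc hd x hx => by rw [add_assoc]; exact hc _ (hd x hx)

/-- The canonical surjection `π_a : St(H_a) → Γ(H_a)`, `c ↦ γ_c`. -/
def gammaMap (a : S) (c : ↥(stabSub S a)) : Gamma S a :=
  ⟨fun x => ⟨(↑c : S) + ↑x, c.2 ↑x x.2⟩, ⟨↑c, c.2, fun _ => rfl⟩⟩

/-- The semigroup algebra `R[X;S]` of a commutative semigroup, realized inside the monoid
algebra of the monoid obtained from `S` by adjoining an identity element. -/
abbrev SAlg (R : Type*) [CommRing R] (S : Type*) [AddCommSemigroup S] :=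
  AddMonoidAlgebra R (WithZero S)

/-- The monomial `r·X^s` of the semigroup algebra. -/
noncomputable def Xm (R : Type*) [CommRing R] {S : Type*} [AddCommSemigroup S] (s : S) (r : R) :
    SAlg R S := AddMonoidAlgebra.single (↑s) r

/-- The factor `X^s - a·X^{e(s)}` of the semigroup algebra. -/
noncomputable def facX (R : Type*) [CommRing R] {S : Type*} [AddCommSemigroup S]
    (s : S) (a : R) : SAlg R S := Xm R s 1 - Xm R (eIdem S s) a

/-- The invariant `d(S,R)`: the supremum of all `ℓ` such that some sequence `s_1,…,s_ℓ` over
`S` satisfies `(X^{s_1} - a_1 X^{e(s_1)}) ⋯ (X^{s_ℓ} - a_ℓ X^{e(s_ℓ)}) ≠ 0` in `R[X;S]` for all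
nonzero `a_1, …, a_ℓ ∈ R`. -/
noncomputable def dd (R : Type*) [CommRing R] (S : Type*) [AddCommSemigroup S] : ℕ∞ :=
  sSup {n : ℕ∞ | ∃ ℓ : ℕ, n = (ℓ : ℕ∞) ∧ ∃ s : Fin ℓ → S,
    ∀ a : Fin ℓ → R, (∀ i, a i ≠ 0) → ∏ i, facX R (s i) (a i) ≠ 0}

/-- `Λ(S)`: the minimum over all generating sets `A` of `S` of `1 + Σ_{a∈A} (ρ(a)-1)`. -/
noncomputable def Lam (S : Type*) [AddCommSemigroup S] : ℕ :=
  sInf {n : ℕ | ∃ A : Finset S,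
    AddSubsemigroup.closure (↑A : Set S) = ⊤ ∧ n = 1 + ∑ a ∈ A, (rho S a - 1)}

/-- An elementary semigroup: an ideal extension of a nilsemigroup `N` by a group with zero
`G ∪ {∞}`. -/
def IsElementary : Prop :=
  ∃ G N : Set S, G ∪ N = Set.univ ∧ Disjoint G N ∧ IsSubgroupSet S G ∧
    (∀ x ∈ N, ∀ s : S, s + x ∈ N) ∧
    ∃ z ∈ N, (∀ s : S, s + z = z) ∧ ∀ x ∈ N, ∃ n : ℕ, nsmul' S n x = z


section Aux1

set_option linter.unusedSectionVars false

variable {S : Type*} [AddCommSemigroup S]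

theorem ns_succ (n : ℕ) (x : S) : nsmul' S (n + 1) x = x + nsmul' S n x := rfl

theorem ns_add (m n : ℕ) (x : S) :
    nsmul' S (m + n + 1) x = nsmul' S m x + nsmul' S n x := by
  induction m with
  | zero => rw [Nat.zero_add]; rfl
  | succ m ih =>
      rw [show m + 1 + n + 1 = (m + n + 1) + 1 by omega]
      show x + nsmul' S (m + n + 1) x = (x + nsmul' S m x) + nsmul' S n x
      rw [ih, add_assoc]

theorem ns_distrib (n : ℕ) (x y : S) :
    nsmul' S n (x + y) = nsmul' S n x + nsmul' S n y := by
  induction n with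
  | zero => rfl
  | succ n ih =>
      show (x + y) + nsmul' S n (x + y) = (x + nsmul' S n x) + (y + nsmul' S n y)
      rw [ih, add_add_add_comm]

theorem ns_idem (n : ℕ) {x : S} (h : x + x = x) : nsmul' S n x = x := by
  induction n with
  | zero => rfl
  | succ n ih => show x + nsmul' S n x = x; rw [ih, h]

theorem ns_comp (m n : ℕ) (x : S) :
    nsmul' S m (nsmul' S n x) = nsmul' S (m * n + m + n) x := by
  induction m with
  | zero => rw [show 0 * n + 0 + n = n by omega]; rfl
  | succ m ih =>
      show nsmul' S n x + nsmul' S m (nsmul' S n x) = _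
      rw [ih, ← ns_add n (m * n + m + n) x,
        show n + (m * n + m + n) + 1 = (m + 1) * n + (m + 1) + n by ring]

theorem ns_hom {T : Type*} [AddCommSemigroup T] (f : S → T)
    (hf : ∀ a b : S, f (a + b) = f a + f b) (n : ℕ) (x : S) :
    f (nsmul' S n x) = nsmul' T n (f x) := by
  induction n with
  | zero => rfl
  | succ n ih =>
      show f (x + nsmul' S n x) = f x + nsmul' T n (f x)
      rw [hf, ih]

theorem gEq_symm {a b : S} (h : gEq S a b) : gEq S b a := ⟨h.2, h.1⟩

/-- sum of a nonempty tuple -/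
def finsum' : ∀ {m : ℕ}, (Fin (m + 1) → S) → S
  | 0, s => s 0
  | _ + 1, s => s 0 + finsum' fun i => s i.succ

theorem finsum'_succ {m : ℕ} (s : Fin (m + 2) → S) :
    finsum' s = s 0 + finsum' fun i => s i.succ := rfl

theorem finsum'_idem : ∀ {m : ℕ} (s : Fin (m + 1) → S),
    (∀ i, s i + s i = s i) → finsum' s + finsum' s = finsum' s := by
  intro m
  induction m with
  | zero => intro s h; exact h 0
  | succ m ih =>
      intro s h
      rw [finsum'_succ, add_add_add_comm, h 0, ih _ fun i => h i.succ]

theorem finsum'_decomp : ∀ {m : ℕ} (s : Fin (m + 1) → S) (i : Fin (m + 1)),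
    finsum' s = s i ∨ ∃ τ, finsum' s = s i + τ := by
  intro m
  induction m with
  | zero =>
      intro s i
      left
      have hi : i = 0 := Fin.fin_one_eq_zero i
      rw [hi]
      rfl
  | succ m ih =>
      intro s i
      rcases Fin.eq_zero_or_eq_succ i with rfl | ⟨j, rfl⟩
      · right; exact ⟨finsum' fun k => s k.succ, rfl⟩
      · rcases ih (fun k => s k.succ) j with h | ⟨τ, h⟩
        · right
          refine ⟨s 0, ?_⟩
          rw [finsum'_succ, h, add_comm]
        · right
          refine ⟨τ + s 0, ?_⟩
          rw [finsum'_succ, h, add_comm (s 0), add_assoc]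

end Aux1

section Aux2

set_option linter.unusedSectionVars false

variable {S : Type*} [AddCommSemigroup S] [Fintype S]

theorem idemSet_nonempty (x : S) :
    ∃ n, nsmul' S n x + nsmul' S n x = nsmul' S n x := by
  obtain ⟨i, j, hne, hij⟩ := Finite.exists_ne_map_eq_of_infinite fun n : ℕ => nsmul' S n x
  have H : ∃ i d : ℕ, 0 < d ∧ nsmul' S (i + d) x = nsmul' S i x := by
    rcases Nat.lt_or_ge i j with h | h
    · exact ⟨i, j - i, by omega, by rw [show i + (j - i) = j by omega]; exact hij.symm⟩
    · exact ⟨j, i - j, by omega, by rw [show j + (i - j) = i by omega]; exact hij⟩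
  clear hne hij
  obtain ⟨i, d, hd, hstep⟩ := H
  have shift : ∀ t, nsmul' S (i + d + t) x = nsmul' S (i + t) x := by
    intro t
    induction t with
    | zero => exact hstep
    | succ t ih =>
        rw [show i + d + (t + 1) = (i + d + t) + 1 by omega, ns_succ, ih, ← ns_succ,
          show (i + t) + 1 = i + (t + 1) by omega]
  have per : ∀ k t, nsmul' S (i + t + k * d) x = nsmul' S (i + t) x := by
    intro k
    induction k with
    | zero => intro t; rw [show i + t + 0 * d = i + t by omega]
    | succ k ih =>
        intro t
        rw [show i + t + (k + 1) * d = i + d + (t + k * d) by ring, shift,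
          show i + (t + k * d) = i + t + k * d by ring, ih]
  refine ⟨(i + 1) * d - 1, ?_⟩
  set n := (i + 1) * d - 1 with hn
  have h1 : n + 1 = (i + 1) * d := Nat.succ_pred_eq_of_pos (Nat.mul_pos (by omega) hd)
  have h2 : i + 1 ≤ (i + 1) * d := Nat.le_mul_of_pos_right (i + 1) hd
  have hni : i ≤ n := by omega
  rw [← ns_add n n x]
  have key := per (i + 1) (n - i)
  rw [show i + (n - i) = n by omega] at key
  rw [show n + n + 1 = n + (i + 1) * d by omega, key]

theorem eIdem_idem (x : S) : eIdem S x + eIdem S x = eIdem S x :=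
  Nat.sInf_mem (idemSet_nonempty x)

theorem eIdem_unique {x g : S} (hg : g + g = g) (hm : ∃ n, g = nsmul' S n x) :
    g = eIdem S x := by
  obtain ⟨m, hgm⟩ := hm
  have he : eIdem S x + eIdem S x = eIdem S x := eIdem_idem x
  set r := sInf {n : ℕ | nsmul' S n x + nsmul' S n x = nsmul' S n x} with hr
  have hex : eIdem S x = nsmul' S r x := rfl
  calc g = nsmul' S r g := (ns_idem r hg).symm
    _ = nsmul' S r (nsmul' S m x) := by rw [hgm]
    _ = nsmul' S (r * m + r + m) x := ns_comp r m x
    _ = nsmul' S (m * r + m + r) x := by rw [show r * m + r + m = m * r + m + r by ring]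
    _ = nsmul' S m (nsmul' S r x) := (ns_comp m r x).symm
    _ = nsmul' S m (eIdem S x) := by rw [← hex]
    _ = eIdem S x := ns_idem m he

theorem eIdem_of_idem {x : S} (hx : x + x = x) : eIdem S x = x :=
  (eIdem_unique hx ⟨0, rfl⟩).symm

theorem eIdem_add (x y : S) : eIdem S (x + y) = eIdem S x + eIdem S y := by
  refine (eIdem_unique ?_ ?_).symm
  · rw [add_add_add_comm, eIdem_idem, eIdem_idem]
  · set p := sInf {n : ℕ | nsmul' S n x + nsmul' S n x = nsmul' S n x} with hp
    set q := sInf {n : ℕ | nsmul' S n y + nsmul' S n y = nsmul' S n y} with hq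
    have hx : eIdem S x = nsmul' S p x := rfl
    have hy : eIdem S y = nsmul' S q y := rfl
    refine ⟨p * q + p + q, ?_⟩
    have h1 : eIdem S x = nsmul' S (p * q + p + q) x := by
      rw [show p * q + p + q = q * p + q + p by ring, ← ns_comp q p x, ← hx]
      exact (ns_idem q (eIdem_idem x)).symm
    have h2 : eIdem S y = nsmul' S (p * q + p + q) y := by
      rw [← ns_comp p q y, ← hy]
      exact (ns_idem p (eIdem_idem y)).symm
    rw [h1, h2, ns_distrib]

theorem eIdem_gLe (x : S) : gLe S (eIdem S x) x := by
  show gLe S (nsmul' S (sInf {n : ℕ | nsmul' S n x + nsmul' S n x = nsmul' S n x}) x) x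
  generalize sInf {n : ℕ | nsmul' S n x + nsmul' S n x = nsmul' S n x} = r
  cases r with
  | zero => exact Or.inl rfl
  | succ m => exact Or.inr ⟨nsmul' S m x, rfl⟩

end Aux2
section Aux3

set_option linter.unusedSectionVars false

variable {S : Type*} [AddCommSemigroup S] [Fintype S]
variable (hCl : ∀ a : S, ∃ a' : S, a + a' + a = a ∧ a' + a + a' = a')

theorem mem_HClass_self (a : S) : a ∈ HClass S a := ⟨Or.inl rfl, Or.inl rfl⟩

include hCl

theorem add_eIdem (x : S) : x + eIdem S x = x := by
  obtain ⟨x', h1, h2⟩ := hCl x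
  set e := x + x' with hedef
  have he : e + e = e := by
    show (x + x') + (x + x') = x + x'
    rw [← add_assoc, h1]
  have hxe : x + e = x := by
    rw [add_comm x e, hedef, h1]
  set f := eIdem S x with hfdef
  have hf : f + f = f := eIdem_idem x
  set r := sInf {n : ℕ | nsmul' S n x + nsmul' S n x = nsmul' S n x} with hr
  have hfr : f = nsmul' S r x := rfl
  have he2 : e = f + nsmul' S r x' := by
    calc e = nsmul' S r e := (ns_idem r he).symm
      _ = nsmul' S r x + nsmul' S r x' := ns_distrib r x x'
      _ = f + nsmul' S r x' := by rw [← hfr]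
  have h4 : e + f = e := by
    calc e + f = (f + nsmul' S r x') + f := by rw [← he2]
      _ = (f + f) + nsmul' S r x' := add_right_comm f (nsmul' S r x') f
      _ = f + nsmul' S r x' := by rw [hf]
      _ = e := he2.symm
  calc x + f = (x + e) + f := by rw [hxe]
    _ = x + (e + f) := add_assoc x e f
    _ = x + e := by rw [h4]
    _ = x := hxe

theorem eIdem_add_self (x : S) : eIdem S x + x = x := by
  rw [add_comm]; exact add_eIdem hCl x

theorem eIdem_add_nsmul (x : S) (k : ℕ) :
    eIdem S x + nsmul' S k x = nsmul' S k x := by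
  induction k with
  | zero => exact eIdem_add_self hCl x
  | succ k ih =>
      show eIdem S x + (x + nsmul' S k x) = x + nsmul' S k x
      rw [← add_assoc, add_comm (eIdem S x) x, add_assoc, ih]

theorem cyc_subgroup (x : S) : IsSubgroupSet S (cyc S x) := by
  set r := sInf {n : ℕ | nsmul' S n x + nsmul' S n x = nsmul' S n x} with hr
  have hfr : eIdem S x = nsmul' S r x := rfl
  have hf : eIdem S x + eIdem S x = eIdem S x := eIdem_idem x
  have hxf : x + eIdem S x = x := add_eIdem hCl x
  have perlem : ∀ t, nsmul' S (t + (r + 1)) x = nsmul' S t x := by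
    intro t
    induction t with
    | zero =>
        rw [Nat.zero_add]
        show x + nsmul' S r x = nsmul' S 0 x
        rw [← hfr, hxf]
        rfl
    | succ t ih =>
        rw [show t + 1 + (r + 1) = (t + (r + 1)) + 1 by omega, ns_succ, ih]
        rfl
  have perk : ∀ q t, nsmul' S (t + q * (r + 1)) x = nsmul' S t x := by
    intro q
    induction q with
    | zero => intro t; rw [show t + 0 * (r + 1) = t by omega]
    | succ q ih =>
        intro t
        rw [show t + (q + 1) * (r + 1) = (t + q * (r + 1)) + (r + 1) by ring, perlem, ih]
  refine ⟨?_, eIdem S x, ⟨r, rfl⟩, ?_, ?_⟩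
  · rintro _ ⟨m, rfl⟩ _ ⟨n, rfl⟩
    exact ⟨m + n + 1, ns_add m n x⟩
  · rintro _ ⟨k, rfl⟩
    exact eIdem_add_nsmul hCl x k
  · rintro _ ⟨k, rfl⟩
    show ∃ y ∈ cyc S x, nsmul' S k x + y = eIdem S x
    have hkdecomp : k % (r + 1) + (r + 1) * (k / (r + 1)) = k := Nat.mod_add_div k (r + 1)
    have hkc : nsmul' S k x = nsmul' S (k % (r + 1)) x := by
      conv_lhs => rw [← hkdecomp]
      rw [Nat.mul_comm]
      exact perk (k / (r + 1)) (k % (r + 1))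
    have hclt : k % (r + 1) < r + 1 := Nat.mod_lt k (by omega)
    rcases Nat.lt_or_ge (k % (r + 1)) r with hlt | hge
    · refine ⟨nsmul' S (r - k % (r + 1) - 1) x, ⟨_, rfl⟩, ?_⟩
      rw [hkc, ← ns_add, show k % (r + 1) + (r - k % (r + 1) - 1) + 1 = r by omega, ← hfr]
    · have heq : k % (r + 1) = r := by omega
      refine ⟨eIdem S x, ⟨r, rfl⟩, ?_⟩
      rw [hkc, heq, ← hfr, hf]

theorem mem_HClass_eIdem (x : S) : x ∈ HClass S (eIdem S x) :=
  ⟨Or.inr ⟨x, (eIdem_add_self hCl x).symm⟩, eIdem_gLe x⟩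

theorem eIdem_mem_HClass (a : S) : eIdem S a ∈ HClass S a :=
  gEq_symm (mem_HClass_eIdem hCl a)

theorem hC_idem_add (a : S) : ∀ x ∈ HClass S a, eIdem S a + x = x := by
  intro x hx
  rcases hx.1 with h | ⟨c, h⟩
  · rw [h]; exact eIdem_add_self hCl a
  · rw [h, ← add_assoc, eIdem_add_self hCl a]

theorem gLe_self_add_self (a : S) : gLe S a (a + a) := by
  rcases eIdem_gLe a with h | ⟨c, h⟩
  · exact Or.inl (by conv_lhs => rw [← add_eIdem hCl a, h])
  · refine Or.inr ⟨c, ?_⟩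
    conv_lhs => rw [← add_eIdem hCl a, h, ← add_assoc]

theorem HClass_add_mem (a : S) (x y : S) (hx : x ∈ HClass S a) (hy : y ∈ HClass S a) :
    x + y ∈ HClass S a := by
  have h2 : gEq S (x + y) (a + a) := gEq_add S hx hy
  exact ⟨gLe_trans S h2.1 (Or.inr ⟨a, rfl⟩), gLe_trans S (gLe_self_add_self hCl a) h2.2⟩

theorem HClass_subgroup (a : S) : IsSubgroupSet S (HClass S a) := by
  refine ⟨fun x hx y hy => HClass_add_mem hCl a x y hx hy,
    eIdem S a, eIdem_mem_HClass hCl a, hC_idem_add hCl a, ?_⟩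
  intro x hx
  have hfx : gLe S (eIdem S a) x :=
    gLe_trans S (eIdem_mem_HClass hCl a).1 hx.2
  have hxf : x + eIdem S a = x := by
    rw [add_comm]; exact hC_idem_add hCl a x hx
  rcases hfx with heq | ⟨d, hd⟩
  · exact ⟨eIdem S a, eIdem_mem_HClass hCl a, by rw [← heq, eIdem_idem]⟩
  · refine ⟨eIdem S a + d, ?_, ?_⟩
    · have h1 : gLe S (eIdem S a + d) (eIdem S a) := Or.inr ⟨d, rfl⟩
      have h2 : gLe S (eIdem S a) (eIdem S a + d) := by
        refine Or.inr ⟨x, ?_⟩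
        calc eIdem S a = x + d := hd
          _ = (x + eIdem S a) + d := by rw [hxf]
          _ = x + (eIdem S a + d) := add_assoc x (eIdem S a) d
          _ = (eIdem S a + d) + x := add_comm _ _
      exact ⟨gLe_trans S h1 (eIdem_mem_HClass hCl a).1,
        gLe_trans S (eIdem_mem_HClass hCl a).2 h2⟩
    · calc x + (eIdem S a + d) = (x + eIdem S a) + d := (add_assoc x _ d).symm
        _ = x + d := by rw [hxf]
        _ = eIdem S a := hd.symm

theorem HClass_maximal (a : S) (T : Set S) (hT : IsSubgroupSet S T)
    (hsub : HClass S a ⊆ T) : T = HClass S a := by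
  obtain ⟨hclos, z, hzT, hid, hinv⟩ := hT
  have haT : a ∈ T := hsub (mem_HClass_self a)
  obtain ⟨ya, hyaT, hya⟩ := hinv a haT
  apply Set.Subset.antisymm _ hsub
  intro x hxT
  obtain ⟨yx, hyxT, hyx⟩ := hinv x hxT
  constructor
  · exact Or.inr ⟨ya + x, by rw [← add_assoc, hya, hid x hxT]⟩
  · exact Or.inr ⟨yx + a, by rw [← add_assoc, hyx, hid a haT]⟩

/-- `H_a` as an additive subsemigroup. -/
def HSub (a : S) : AddSubsemigroup S :=
  ⟨HClass S a, fun {x y} hx hy => HClass_add_mem hCl a x y hx hy⟩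

end Aux3
section Aux4

set_option linter.unusedSectionVars false

variable {T T' : Type*} [AddCommSemigroup T] [AddCommSemigroup T']

/-- `Option.map` on `WithZero`. -/
def wfun (f : T → T') : WithZero T → WithZero T' := Option.map f

theorem wfun_zero (f : T → T') : wfun f (0 : WithZero T) = (0 : WithZero T') := rfl

theorem wfun_coe (f : T → T') (a : T) :
    wfun f (a : WithZero T) = ((f a : T') : WithZero T') := rfl

theorem wmap_add' (f : T → T') (hf : ∀ x y, f (x + y) = f x + f y) (u v : WithZero T) :
    wfun f (u + v) = wfun f u + wfun f v := by
  induction u with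
  | zero => rw [wfun_zero, zero_add, zero_add]
  | coe a =>
      induction v with
      | zero => rw [wfun_zero, add_zero, add_zero]
      | coe b => rw [← WithZero.coe_add, wfun_coe, wfun_coe, wfun_coe, ← WithZero.coe_add, hf]

/-- `Option.map f` as an `AddHom` on `WithZero`. -/
def wmap (f : T → T') (hf : ∀ x y, f (x + y) = f x + f y) :
    AddHom (WithZero T) (WithZero T') := ⟨wfun f, fun u v => wmap_add' f hf u v⟩

theorem wmap_coe (f : T → T') (hf : ∀ x y, f (x + y) = f x + f y) (a : T) :
    wmap f hf (a : WithZero T) = ((f a : T') : WithZero T') := rfl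

/-- adding a fixed idempotent as an `AddHom` on `WithZero`. -/
def wadd (e : T) (he : e + e = e) : AddHom (WithZero T) (WithZero T) :=
  ⟨fun w => w + (e : WithZero T), fun u v => by
    show (u + v) + (e : WithZero T) = (u + (e : WithZero T)) + (v + (e : WithZero T))
    rw [add_add_add_comm, ← WithZero.coe_add, he]⟩

theorem wadd_apply (e : T) (he : e + e = e) (w : WithZero T) :
    wadd e he w = w + (e : WithZero T) := rfl

theorem eIdem_hom (f : T → T') (hf : ∀ x y, f (x + y) = f x + f y)
    (hi : Function.Injective f) (x : T) : f (eIdem T x) = eIdem T' (f x) := by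
  have hsets : {n : ℕ | nsmul' T n x + nsmul' T n x = nsmul' T n x} =
      {n : ℕ | nsmul' T' n (f x) + nsmul' T' n (f x) = nsmul' T' n (f x)} := by
    ext n
    simp only [Set.mem_setOf_eq]
    rw [← ns_hom f hf, ← hf]
    exact ⟨fun h => congrArg f h, fun h => hi h⟩
  show f (nsmul' T (sInf {n : ℕ | nsmul' T n x + nsmul' T n x = nsmul' T n x}) x) =
    nsmul' T' (sInf {n : ℕ | nsmul' T' n (f x) + nsmul' T' n (f x) = nsmul' T' n (f x)}) (f x)
  rw [← hsets, ns_hom f hf]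

variable (K : Type*) [Field K]

theorem facX_eq (x : T) (b : K) :
    facX K x b = (AddMonoidAlgebra.single ((x : WithZero T)) (1 : K)
      - AddMonoidAlgebra.single ((eIdem T x : T) : WithZero T) b : SAlg K T) := rfl

theorem mapd_sub (f : WithZero T → WithZero T') (u v : SAlg K T) :
    (AddMonoidAlgebra.mapDomain f (u - v) : SAlg K T') =
      AddMonoidAlgebra.mapDomain f u - AddMonoidAlgebra.mapDomain f v :=
  eq_sub_of_add_eq (by rw [← AddMonoidAlgebra.mapDomain_add, sub_add_cancel])

theorem mapd_facX (g : AddHom (WithZero T) (WithZero T')) (x : T) (b : K) :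
    (AddMonoidAlgebra.mapDomain ⇑g (facX K x b) : SAlg K T') =
      (AddMonoidAlgebra.single (g (x : WithZero T)) (1 : K)
        - AddMonoidAlgebra.single (g ((eIdem T x : T) : WithZero T)) b : SAlg K T') := by
  rw [facX_eq, mapd_sub, AddMonoidAlgebra.mapDomain_single, AddMonoidAlgebra.mapDomain_single]

theorem mapd_prod (g : AddHom (WithZero T) (WithZero T')) :
    ∀ {m : ℕ} (s : Fin (m + 1) → T) (a : Fin (m + 1) → K),
    (AddMonoidAlgebra.mapDomain ⇑g (∏ i, facX K (s i) (a i)) : SAlg K T') =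
      ∏ i, (AddMonoidAlgebra.single (g ((s i : T) : WithZero T)) (1 : K)
        - AddMonoidAlgebra.single (g ((eIdem T (s i) : T) : WithZero T)) (a i) : SAlg K T') := by
  intro m
  induction m with
  | zero =>
      intro s a
      rw [Fin.prod_univ_one, Fin.prod_univ_one, mapd_facX]
  | succ m ih =>
      intro s a
      conv_lhs => rw [Fin.prod_univ_succ]
      conv_rhs => rw [Fin.prod_univ_succ]
      rw [AddMonoidAlgebra.mapDomain_mul g, ih, mapd_facX]

theorem supp_facX (x : T) (b : K) (w : WithZero T) (hw : w ∈ (facX K x b).coeff.support) :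
    w = (x : WithZero T) ∨ w = ((eIdem T x : T) : WithZero T) := by
  classical
  rw [facX_eq, AddMonoidAlgebra.coeff_sub, AddMonoidAlgebra.coeff_single,
    AddMonoidAlgebra.coeff_single] at hw
  have h1 := Finsupp.support_sub (ι := WithZero T) (G := K) hw
  rcases Finset.mem_union.1 h1 with h | h
  · exact Or.inl (Finset.mem_singleton.1 (Finsupp.support_single_subset h))
  · exact Or.inr (Finset.mem_singleton.1 (Finsupp.support_single_subset h))

theorem dd_mono (f : T → T') (hf : ∀ x y, f (x + y) = f x + f y)
    (hi : Function.Injective f) : dd K T ≤ dd K T' := by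
  show sSup _ ≤ sSup _
  apply sSup_le_sSup
  rintro n ⟨ℓ, rfl, s, hs⟩
  refine ⟨ℓ, rfl, fun i => f (s i), fun a ha => ?_⟩
  cases ℓ with
  | zero =>
      intro hcon
      rw [show (Finset.univ : Finset (Fin 0)) = ∅ from rfl, Finset.prod_empty] at hcon
      exact one_ne_zero hcon
  | succ m =>
      intro hcon
      apply hs a ha
      have hmap := mapd_prod K (wmap f hf) s a
      have hr : ∀ i : Fin (m + 1),
          (AddMonoidAlgebra.single ((wmap f hf) ((s i : T) : WithZero T)) (1 : K)
            - AddMonoidAlgebra.single ((wmap f hf) ((eIdem T (s i) : T) : WithZero T)) (a i) : SAlg K T')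
          = facX K (f (s i)) (a i) := by
        intro i
        rw [facX_eq, wmap_coe, wmap_coe, eIdem_hom f hf hi]
      rw [Finset.prod_congr rfl fun i _ => hr i, hcon] at hmap
      have hinj : Function.Injective
          (fun u : SAlg K T => (AddMonoidAlgebra.mapDomain ⇑(wmap f hf) u : SAlg K T')) :=
        AddMonoidAlgebra.mapDomain_injective (Option.map_injective hi)
      have hz : (AddMonoidAlgebra.mapDomain ⇑(wmap f hf) (∏ i, facX K (s i) (a i)) : SAlg K T')
          = AddMonoidAlgebra.mapDomain ⇑(wmap f hf) (0 : SAlg K T) := by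
        rw [hmap]
        exact (AddMonoidAlgebra.mapDomain_zero _).symm
      exact hinj hz

end Aux4
section Aux5

set_option linter.unusedSectionVars false

variable {S : Type*} [AddCommSemigroup S] [Fintype S]

example (H : AddSubsemigroup S) : AddCommSemigroup ↥H := inferInstance

theorem finsum'_absorb {m : ℕ} (s : Fin (m + 1) → S) (i : Fin (m + 1)) :
    eIdem S (s i) + (finsum' fun j => eIdem S (s j)) = finsum' fun j => eIdem S (s j) := by
  rcases finsum'_decomp (fun j => eIdem S (s j)) i with h | ⟨τ, h⟩
  · rw [h, eIdem_idem]
  · rw [h, ← add_assoc, eIdem_idem]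

theorem eIdem_shift {m : ℕ} (s : Fin (m + 1) → S) (i : Fin (m + 1)) :
    eIdem S (s i + finsum' fun j => eIdem S (s j)) = finsum' fun j => eIdem S (s j) := by
  have he : (finsum' fun j => eIdem S (s j)) + (finsum' fun j => eIdem S (s j))
      = finsum' fun j => eIdem S (s j) := finsum'_idem _ fun i => eIdem_idem (s i)
  rw [eIdem_add, eIdem_of_idem he, finsum'_absorb]

variable (hCl : ∀ a : S, ∃ a' : S, a + a' + a = a ∧ a' + a + a' = a')
variable (K : Type*) [Field K]
include hCl

theorem support_absorb :
    ∀ {m : ℕ} (s : Fin (m + 1) → S) (a : Fin (m + 1) → K) (w : WithZero S),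
      w ∈ (∏ i, facX K (s i) (a i) : SAlg K S).coeff.support →
      w + (((finsum' fun i => eIdem S (s i)) : S) : WithZero S) = w := by
  intro m
  induction m with
  | zero =>
      intro s a w hw
      rw [Fin.prod_univ_one] at hw
      show w + ((eIdem S (s 0) : S) : WithZero S) = w
      rcases supp_facX K (s 0) (a 0) w hw with h | h
      · rw [h, ← WithZero.coe_add, add_eIdem hCl (s 0)]
      · rw [h, ← WithZero.coe_add, eIdem_idem (s 0)]
  | succ m ih =>
      intro s a w hw
      classical
      rw [Fin.prod_univ_succ] at hw
      have hsub := AddMonoidAlgebra.support_coeff_mul_subset (facX K (s 0) (a 0))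
        (∏ i : Fin (m + 1), facX K (s i.succ) (a i.succ)) hw
      obtain ⟨u, hu, v, hv, rfl⟩ := Finset.mem_add.1 hsub
      have hv' := ih (fun i => s i.succ) (fun i => a i.succ) v hv
      have hu' : u + ((eIdem S (s 0) : S) : WithZero S) = u := by
        rcases supp_facX K (s 0) (a 0) u hu with h | h
        · rw [h, ← WithZero.coe_add, add_eIdem hCl (s 0)]
        · rw [h, ← WithZero.coe_add, eIdem_idem (s 0)]
      have hfin : (finsum' fun i => eIdem S (s i))
          = eIdem S (s 0) + finsum' fun i => eIdem S (s i.succ) := rfl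
      rw [hfin, WithZero.coe_add, add_add_add_comm, hu', hv']

theorem prod_absorb_eq {m : ℕ} (s : Fin (m + 1) → S) (a : Fin (m + 1) → K) :
    (∏ i, facX K (s i + finsum' fun j => eIdem S (s j)) (a i) : SAlg K S)
      = ∏ i, facX K (s i) (a i) := by
  set e := finsum' fun j => eIdem S (s j) with he_def
  have he : e + e = e := finsum'_idem _ fun i => eIdem_idem (s i)
  have hmap := mapd_prod K (wadd e he) s a
  have hid : (AddMonoidAlgebra.mapDomain ⇑(wadd e he) (∏ i, facX K (s i) (a i)) : SAlg K S)
      = ∏ i, facX K (s i) (a i) := by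
    have hcongr : ∀ w ∈ (∏ i, facX K (s i) (a i) : SAlg K S).coeff.support,
        (wadd e he) w = id w := fun w hw => support_absorb hCl K s a w hw
    calc AddMonoidAlgebra.mapDomain ⇑(wadd e he) (∏ i, facX K (s i) (a i))
        = AddMonoidAlgebra.ofCoeff
            (Finsupp.mapDomain id (∏ i, facX K (s i) (a i) : SAlg K S).coeff) :=
          congrArg AddMonoidAlgebra.ofCoeff (Finsupp.mapDomain_congr hcongr)
      _ = ∏ i, facX K (s i) (a i) := by rw [Finsupp.mapDomain_id]
  have hfac : ∀ i : Fin (m + 1),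
      (AddMonoidAlgebra.single ((wadd e he) ((s i : S) : WithZero S)) (1 : K)
        - AddMonoidAlgebra.single ((wadd e he) ((eIdem S (s i) : S) : WithZero S)) (a i)
        : SAlg K S)
      = facX K (s i + e) (a i) := by
    intro i
    rw [facX_eq, eIdem_shift s i,
      show (wadd e he) ((s i : S) : WithZero S) = ((s i + e : S) : WithZero S) from rfl,
      show (wadd e he) ((eIdem S (s i) : S) : WithZero S)
        = ((eIdem S (s i) + e : S) : WithZero S) from rfl,
      finsum'_absorb s i]
  calc (∏ i, facX K (s i + e) (a i) : SAlg K S)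
      = ∏ i, (AddMonoidAlgebra.single ((wadd e he) ((s i : S) : WithZero S)) (1 : K)
        - AddMonoidAlgebra.single ((wadd e he) ((eIdem S (s i) : S) : WithZero S)) (a i)
        : SAlg K S) := (Finset.prod_congr rfl fun i _ => hfac i).symm
    _ = ∏ i, facX K (s i) (a i) := by rw [← hmap, hid]

theorem main_key {m : ℕ} (s : Fin (m + 1) → S)
    (hs : ∀ a : Fin (m + 1) → K, (∀ i, a i ≠ 0) →
      (∏ i, facX K (s i) (a i) : SAlg K S) ≠ 0) :
    ∃ a0 : S, (((m + 1 : ℕ) : ℕ∞) ≤ dd K ↥(HSub hCl a0)) := by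
  classical
  set e := finsum' fun j => eIdem S (s j) with he_def
  refine ⟨e, ?_⟩
  have hmem : ∀ i : Fin (m + 1), s i + e ∈ HClass S e := by
    intro i
    have h1 := mem_HClass_eIdem hCl (s i + e)
    rwa [eIdem_shift s i] at h1
  set H := HSub hCl e with hH
  set τ : Fin (m + 1) → ↥H := fun i => (⟨s i + e, hmem i⟩ : ↥H) with hτ
  show ((m + 1 : ℕ) : ℕ∞) ≤ sSup _
  apply le_sSup
  refine ⟨m + 1, rfl, τ, ?_⟩
  intro a ha hcon
  apply hs a ha
  have hvadd : ∀ x y : ↥H, ((x + y : ↥H) : S) = (x : S) + (y : S) := fun x y => rfl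
  have hKmap := mapd_prod K (wmap (Subtype.val : ↥H → S) hvadd) τ a
  have hfac : ∀ i : Fin (m + 1),
      (AddMonoidAlgebra.single ((wmap (Subtype.val : ↥H → S) hvadd) ((τ i : ↥H) : WithZero ↥H)) (1 : K)
        - AddMonoidAlgebra.single
            ((wmap (Subtype.val : ↥H → S) hvadd) ((eIdem ↥H (τ i) : ↥H) : WithZero ↥H)) (a i)
        : SAlg K S)
      = facX K (s i + e) (a i) := by
    intro i
    rw [facX_eq, wmap_coe, wmap_coe,
      eIdem_hom (Subtype.val : ↥H → S) hvadd Subtype.val_injective (τ i)]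
  have hzero : (∏ i, facX K (s i) (a i) : SAlg K S) = 0 := by
    calc (∏ i, facX K (s i) (a i) : SAlg K S)
        = ∏ i, facX K (s i + e) (a i) := (prod_absorb_eq hCl K s a).symm
      _ = ∏ i, (AddMonoidAlgebra.single
            ((wmap (Subtype.val : ↥H → S) hvadd) ((τ i : ↥H) : WithZero ↥H)) (1 : K)
          - AddMonoidAlgebra.single
              ((wmap (Subtype.val : ↥H → S) hvadd) ((eIdem ↥H (τ i) : ↥H) : WithZero ↥H)) (a i)
          : SAlg K S) := (Finset.prod_congr rfl fun i _ => hfac i).symm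
      _ = AddMonoidAlgebra.mapDomain ⇑(wmap (Subtype.val : ↥H → S) hvadd)
            (∏ i, facX K (τ i) (a i)) := hKmap.symm
      _ = AddMonoidAlgebra.mapDomain ⇑(wmap (Subtype.val : ↥H → S) hvadd)
            (0 : SAlg K ↥H) := by rw [hcon]
      _ = 0 := AddMonoidAlgebra.mapDomain_zero _
  exact hzero

end Aux5
section Aux6

set_option linter.unusedSectionVars false

variable {S : Type*} [AddCommSemigroup S] [Fintype S]
variable (hCl : ∀ a : S, ∃ a' : S, a + a' + a = a ∧ a' + a + a' = a')
include hCl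

theorem g0_spec (a : S) :
    ∃ g : Gamma S a → ↥(HSub hCl a), Function.Bijective g ∧
      ∀ γ δ : Gamma S a, ((g (γ + δ) : ↥(HSub hCl a)) : S) = (g γ : S) + (g δ : S) := by
  have hfmem : eIdem S a ∈ HClass S a := eIdem_mem_HClass hCl a
  set E : ↥(HClass S a) := ⟨eIdem S a, hfmem⟩ with hE
  refine ⟨fun γ => ⟨(γ.1 E : S), (γ.1 E).2⟩, ⟨?_, ?_⟩, ?_⟩
  · -- injective
    intro γ δ h
    have h0 : ((γ.1 E : S)) = ((δ.1 E : S)) := congrArg Subtype.val h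
    obtain ⟨c, hc, hγ⟩ := γ.2
    obtain ⟨d, hd, hδ⟩ := δ.2
    rw [hγ E, hδ E] at h0
    apply Subtype.ext
    funext x
    apply Subtype.ext
    have hx : eIdem S a + (x : S) = (x : S) := hC_idem_add hCl a (x : S) x.2
    calc ((γ.1 x : S)) = c + (x : S) := hγ x
      _ = c + (eIdem S a + (x : S)) := by rw [hx]
      _ = (c + eIdem S a) + (x : S) := (add_assoc _ _ _).symm
      _ = (d + eIdem S a) + (x : S) := by rw [h0]
      _ = d + (eIdem S a + (x : S)) := add_assoc _ _ _
      _ = d + (x : S) := by rw [hx]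
      _ = ((δ.1 x : S)) := (hδ x).symm
  · -- surjective
    intro h
    have hmem : (h : S) ∈ HClass S a := h.2
    refine ⟨⟨fun x => ⟨(h : S) + (x : S), HClass_add_mem hCl a _ _ hmem x.2⟩,
      ⟨(h : S), fun x hx => HClass_add_mem hCl a _ x hmem hx, fun x => rfl⟩⟩, ?_⟩
    apply Subtype.ext
    show (h : S) + eIdem S a = (h : S)
    rw [add_comm]
    exact hC_idem_add hCl a (h : S) hmem
  · -- additivity
    intro γ δ
    obtain ⟨c, hc, hγ⟩ := γ.2
    obtain ⟨d, hd, hδ⟩ := δ.2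
    have h1 : (((γ + δ).1 E : S)) = c + ((δ.1 E : S)) := hγ (δ.1 E)
    show (((γ + δ).1 E : S)) = ((γ.1 E : S)) + ((δ.1 E : S))
    calc (((γ + δ).1 E : S)) = c + (d + eIdem S a) := by rw [h1, hδ E]
      _ = (c + d) + eIdem S a := (add_assoc _ _ _).symm
      _ = (c + eIdem S a) + (d + eIdem S a) := by
            rw [add_add_add_comm, eIdem_idem a]
      _ = ((γ.1 E : S)) + ((δ.1 E : S)) := by rw [hγ E, hδ E]

variable (K : Type*) [Field K]

theorem dd_gamma (a : S) : dd K (Gamma S a) = dd K ↥(HSub hCl a) := by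
  obtain ⟨g, hb, hadd⟩ := g0_spec hCl a
  have hadd' : ∀ γ δ : Gamma S a, g (γ + δ) = g γ + g δ := fun γ δ => Subtype.ext (hadd γ δ)
  refine le_antisymm (dd_mono K g hadd' hb.injective) ?_
  set E := Equiv.ofBijective g hb with hEq
  have hg : ∀ u, g (E.symm u) = u := fun u => E.apply_symm_apply u
  have hsymm : ∀ u v, E.symm (u + v) = E.symm u + E.symm v := by
    intro u v
    apply hb.injective
    rw [hadd', hg, hg, hg]
  exact dd_mono K ⇑E.symm hsymm E.symm.injective

end Aux6
/-- `d(S,K)` for finite commutative Clifford semigroups. -/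
theorem stmt2 (S : Type*) [AddCommSemigroup S] [Fintype S] [Nonempty S]
    (hCl : ∀ a : S, ∃ a' : S, a + a' + a = a ∧ a' + a + a' = a')
    (K : Type*) [Field K]
    (hK : SplitField K (expS S) ∨
      ∃ p : ℕ, p.Prime ∧ CharP K p ∧ ∃ t : ℕ, expS S = p ^ t) :
    (∀ a : S, IsSubgroupSet S (cyc S a)) ∧
    (∀ a : S, a ∈ HClass S a ∧ IsSubgroupSet S (HClass S a) ∧
      (∀ T : Set S, IsSubgroupSet S T → HClass S a ⊆ T → T = HClass S a) ∧
      ∃ φ : Gamma S a ≃ ↥(HClass S a),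
        ∀ γ δ : Gamma S a, (↑(φ (γ + δ)) : S) = ↑(φ γ) + ↑(φ δ)) ∧
    dd K S = (⨆ a : S, dd K (Gamma S a)) ∧
    dd K S = ⨆ (H : AddSubsemigroup S) (_ : IsSubgroupSet S ↑H), dd K ↥H := by
  clear hK
  have part3 : dd K S = ⨆ a : S, dd K (Gamma S a) := by
    apply le_antisymm
    · show sSup _ ≤ _
      apply sSup_le
      rintro n ⟨ℓ, rfl, s, hs⟩
      cases ℓ with
      | zero =>
          rw [Nat.cast_zero]
          exact zero_le
      | succ m =>
          obtain ⟨a0, hle⟩ := main_key hCl K s hs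
          calc ((m + 1 : ℕ) : ℕ∞) ≤ dd K ↥(HSub hCl a0) := hle
            _ = dd K (Gamma S a0) := (dd_gamma hCl K a0).symm
            _ ≤ ⨆ a : S, dd K (Gamma S a) := le_iSup (fun a => dd K (Gamma S a)) a0
    · apply iSup_le
      intro a
      rw [dd_gamma hCl K a]
      exact dd_mono K (Subtype.val : ↥(HSub hCl a) → S) (fun x y => rfl)
        Subtype.val_injective
  have part4 : dd K S = ⨆ (H : AddSubsemigroup S) (_ : IsSubgroupSet S ↑H), dd K ↥H := by
    apply le_antisymm
    · show sSup _ ≤ _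
      apply sSup_le
      rintro n ⟨ℓ, rfl, s, hs⟩
      cases ℓ with
      | zero =>
          rw [Nat.cast_zero]
          exact zero_le
      | succ m =>
          obtain ⟨a0, hle⟩ := main_key hCl K s hs
          have hgrp : IsSubgroupSet S ↑(HSub hCl a0) := HClass_subgroup hCl a0
          calc ((m + 1 : ℕ) : ℕ∞) ≤ dd K ↥(HSub hCl a0) := hle
            _ ≤ ⨆ (H : AddSubsemigroup S) (_ : IsSubgroupSet S ↑H), dd K ↥H :=
              le_iSup₂ (f := fun (H : AddSubsemigroup S) (_ : IsSubgroupSet S ↑H) => dd K ↥H)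
                (HSub hCl a0) hgrp
    · apply iSup₂_le
      intro H _
      exact dd_mono K (Subtype.val : ↥H → S) (fun x y => rfl) Subtype.val_injective
  refine ⟨fun a => cyc_subgroup hCl a, fun a => ?_, part3, part4⟩
  refine ⟨mem_HClass_self a, HClass_subgroup hCl a,
    fun T hT hsub => HClass_maximal hCl a T hT hsub, ?_⟩
  obtain ⟨g, hb, hadd⟩ := g0_spec hCl a
  refine ⟨(Equiv.ofBijective g hb).trans (Equiv.subtypeEquivRight fun x => Iff.rfl),
    fun γ δ => ?_⟩
  exact hadd γ δ

end ZS
end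

section
/- For r ≥ 1, let S = C_{k_1;n_1} × ⋯ × C_{k_r;n_r} be a direct product of finite cyclic semigroups with k_1 ≤ k_2 ≤ ⋯ ≤ k_r, and let K be a field such that either (i) K is algebraically closed of characteristic zero, or (ii) K has characteristic p and n_1⋯n_r is a power of the prime p. Then d(S,K) = max( k_r − 1, d(ℤ_{n_1} ⊕ ⋯ ⊕ ℤ_{n_r}, K) ) ≥ max( k_r − 1, D(ℤ_{n_1} ⊕ ⋯ ⊕ ℤ_{n_r}) − 1 ), and the equality d(S,K) = max( k_r − 1, D(ℤ_{n_1} ⊕ ⋯ ⊕ ℤ_{n_r}) − 1 ) holds if r = 1 or K has characteristic p (case (ii)). -/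
namespace ZS

variable (S : Type*) [AddCommSemigroup S]

/-! ### Auxiliary lemmas for stmt5 -/

section Stmt5Aux

variable {S' : Type*} [AddCommSemigroup S']

theorem nsmul'_zero' (x : S') : nsmul' S' 0 x = x := rfl

theorem nsmul'_succ' (m : ℕ) (x : S') : nsmul' S' (m + 1) x = x + nsmul' S' m x := rfl

theorem nsmul'_add' (x : S') (a b : ℕ) :
    nsmul' S' a x + nsmul' S' b x = nsmul' S' (a + b + 1) x := by
  induction a with
  | zero => rw [nsmul'_zero', Nat.zero_add, nsmul'_succ']
  | succ n ih =>
    rw [nsmul'_succ', add_assoc, ih, ← nsmul'_succ']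
    congr 1
    omega

theorem nsmul'_shift {x : S'} {a b : ℕ} (h : nsmul' S' a x = nsmul' S' b x) (c : ℕ) :
    nsmul' S' (a + c + 1) x = nsmul' S' (b + c + 1) x := by
  rw [← nsmul'_add', ← nsmul'_add', h]

theorem nsmul'_nsmul' (x : S') (c m : ℕ) :
    nsmul' S' c (nsmul' S' m x) = nsmul' S' (c * (m + 1) + m) x := by
  induction c with
  | zero => rw [nsmul'_zero']; congr 1; omega
  | succ n ih =>
    rw [nsmul'_succ', ih, nsmul'_add']
    congr 1
    ring

/-- Arithmetic model of a finite cyclic semigroup of index `κ` and period `ν`. -/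
structure CycModel (S' : Type*) [AddCommSemigroup S'] (x : S') (κ ν : ℕ) : Prop where
  hκ : 1 ≤ κ
  hν : 1 ≤ ν
  per_eq : ∀ {m m' : ℕ}, κ - 1 ≤ m → κ - 1 ≤ m' → m ≡ m' [MOD ν] →
    nsmul' S' m x = nsmul' S' m' x
  low_inj : ∀ {m t : ℕ}, m < κ - 1 → nsmul' S' m x = nsmul' S' t x → t = m
  window : ∀ {m d : ℕ}, κ - 1 ≤ m → 0 < d → d < ν → nsmul' S' m x ≠ nsmul' S' (m + d) x

theorem cycModel_of {x : S'} {κ ν : ℕ}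
    (hper : IsPeriodicElem S' x) (hidx : indexOf S' x = κ) (hprd : period S' x = ν) :
    CycModel S' x κ ν := by
  -- a collision exists
  have hninj : ¬ Function.Injective (fun m => nsmul' S' m x) := by
    intro h
    exact Set.infinite_range_of_injective h hper
  obtain ⟨A, B, hAB, hne⟩ := Function.not_injective_iff.mp hninj
  -- the period set
  set P : Set ℕ := {n : ℕ | 0 < n ∧ ∃ m : ℕ, nsmul' S' (m + n) x = nsmul' S' m x} with hP
  have hPne : P.Nonempty := by
    rcases Nat.lt_or_ge A B with h | h
    · exact ⟨B - A, by omega, A, by rw [show A + (B - A) = B by omega]; exact hAB.symm⟩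
    · have h' : B < A := by omega
      exact ⟨A - B, by omega, B, by rw [show B + (A - B) = A by omega]; exact hAB⟩
  have hν1 : ν ∈ P := by
    rw [period, ← hP] at hprd
    exact hprd ▸ Nat.sInf_mem hPne
  have hνmin : ∀ d ∈ P, ν ≤ d := by
    rw [period, ← hP] at hprd
    exact fun d hd => hprd ▸ Nat.sInf_le hd
  obtain ⟨hνpos, m₀, hm₀⟩ := hν1
  -- eventual periodicity with gap ν from m₀
  have shift_ge : ∀ {a b : ℕ}, nsmul' S' a x = nsmul' S' b x → ∀ m, a ≤ m →
      nsmul' S' m x = nsmul' S' (b + (m - a)) x := by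
    intro a b hab m hm
    rcases Nat.eq_or_lt_of_le hm with rfl | h
    · rw [Nat.sub_self, Nat.add_zero]; exact hab
    · have := nsmul'_shift hab (m - a - 1)
      rw [show a + (m - a - 1) + 1 = m by omega] at this
      rw [this]
      congr 1
      omega
  have epd : ∀ m, m₀ ≤ m → nsmul' S' (m + ν) x = nsmul' S' m x := by
    intro m hm
    have := shift_ge hm₀ (m + ν) (by omega)
    rw [this]
    congr 1
    omega
  -- the index set
  set I : Set ℕ := {k : ℕ | ∃ t : ℕ, t ≠ k ∧ nsmul' S' k x = nsmul' S' t x} with hI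
  have hIne : I.Nonempty := ⟨A, B, fun h => hne h.symm, hAB⟩
  have hκval : sInf I = κ - 1 ∧ 1 ≤ κ := by
    rw [indexOf, ← hI] at hidx
    omega
  have hκ1 : 1 ≤ κ := hκval.2
  obtain ⟨t, htne, hteq⟩ : κ - 1 ∈ I := hκval.1 ▸ Nat.sInf_mem hIne
  have low_inj : ∀ {m t' : ℕ}, m < κ - 1 → nsmul' S' m x = nsmul' S' t' x → t' = m := by
    intro m t' hm heq
    by_contra hne'
    have : m ∈ I := ⟨t', hne', heq⟩
    have := hκval.1 ▸ Nat.sInf_le this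
    omega
  have htgt : κ - 1 < t := by
    rcases Nat.lt_or_ge t (κ - 1) with h | h
    · exact absurd (low_inj h hteq.symm).symm htne
    · omega
  -- period d := t - (κ-1) starting at κ-1
  have dper : ∀ m, κ - 1 ≤ m → nsmul' S' (m + (t - (κ - 1))) x = nsmul' S' m x := by
    intro m hm
    have h1 := shift_ge hteq.symm (m + (t - (κ - 1))) (by omega)
    rw [h1]
    congr 1
    omega
  have dpos : 0 < t - (κ - 1) := by omega
  have diter : ∀ j m, κ - 1 ≤ m → nsmul' S' (m + j * (t - (κ - 1))) x = nsmul' S' m x := by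
    intro j
    induction j with
    | zero => intro m hm; rw [Nat.zero_mul, Nat.add_zero]
    | succ jj ih =>
      intro m hm
      have h1 := dper (m + jj * (t - (κ - 1))) (by omega)
      rw [show m + (jj + 1) * (t - (κ - 1)) = m + jj * (t - (κ - 1)) + (t - (κ - 1)) by ring]
      rw [h1]
      exact ih m hm
  -- the period ν holds from κ-1 onwards
  have R1 : ∀ m, κ - 1 ≤ m → nsmul' S' (m + ν) x = nsmul' S' m x := by
    intro m hm
    have hbig : m₀ ≤ m + m₀ * (t - (κ - 1)) := by
      have : m₀ * 1 ≤ m₀ * (t - (κ - 1)) := Nat.mul_le_mul_left m₀ dpos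
      omega
    calc nsmul' S' (m + ν) x = nsmul' S' (m + ν + m₀ * (t - (κ - 1))) x :=
          (diter m₀ (m + ν) (by omega)).symm
      _ = nsmul' S' (m + m₀ * (t - (κ - 1)) + ν) x := by congr 1; ring
      _ = nsmul' S' (m + m₀ * (t - (κ - 1))) x := epd _ hbig
      _ = nsmul' S' m x := diter m₀ m hm
  have R1iter : ∀ c m, κ - 1 ≤ m → nsmul' S' (m + c * ν) x = nsmul' S' m x := by
    intro c
    induction c with
    | zero => intro m hm; rw [Nat.zero_mul, Nat.add_zero]
    | succ cc ih =>
      intro m hm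
      rw [show m + (cc + 1) * ν = m + cc * ν + ν by ring, R1 _ (by omega)]
      exact ih m hm
  refine ⟨hκ1, hνpos, ?_, @low_inj, ?_⟩
  · intro m m' hm hm' hmod
    rcases Nat.le_total m m' with h | h
    · have hdvd : ν ∣ m' - m := (Nat.modEq_iff_dvd' h).mp hmod
      obtain ⟨c, hc⟩ := hdvd
      rw [Nat.mul_comm] at hc
      have := R1iter c m hm
      rw [show m + c * ν = m' by omega] at this
      exact this.symm
    · have hdvd : ν ∣ m - m' := (Nat.modEq_iff_dvd' h).mp hmod.symm
      obtain ⟨c, hc⟩ := hdvd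
      rw [Nat.mul_comm] at hc
      have := R1iter c m' hm'
      rw [show m' + c * ν = m by omega] at this
      exact this
  · intro m d hm hd hdν heq
    have : d ∈ P := ⟨hd, m, heq.symm⟩
    have := hνmin d this
    omega

theorem CycModel.idem_iff {x : S'} {κ ν : ℕ} (cm : CycModel S' x κ ν) (m : ℕ) :
    (nsmul' S' m x + nsmul' S' m x = nsmul' S' m x) ↔ (κ - 1 ≤ m ∧ ν ∣ (m + 1)) := by
  rw [nsmul'_add']
  constructor
  · intro h
    have hm : κ - 1 ≤ m := by
      by_contra hc
      have := cm.low_inj (by omega) h.symm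
      omega
    refine ⟨hm, ?_⟩
    by_contra hndvd
    have hs0 : (m + 1) % ν ≠ 0 := fun h0 => hndvd (Nat.dvd_of_mod_eq_zero h0)
    have hsν : (m + 1) % ν < ν := Nat.mod_lt _ (by have := cm.hν; omega)
    have h1 : nsmul' S' (m + (m + 1) % ν) x = nsmul' S' (m + m + 1) x := by
      apply cm.per_eq (by omega) (by omega)
      have h0 : (m + 1) % ν ≡ m + 1 [MOD ν] := Nat.mod_modEq (m + 1) ν
      have h2 : m + (m + 1) % ν ≡ m + (m + 1) [MOD ν] := Nat.ModEq.add_left m h0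
      rw [show m + m + 1 = m + (m + 1) by omega]
      exact h2
    rw [h] at h1
    exact cm.window hm (by omega) hsν h1.symm
  · rintro ⟨hm, hdvd⟩
    apply cm.per_eq (by omega) hm
    have : m + 1 ≡ 0 [MOD ν] := (Nat.modEq_zero_iff_dvd).mpr hdvd
    calc m + m + 1 = m + (m + 1) := by omega
      _ ≡ m + 0 [MOD ν] := Nat.ModEq.add_left m this
      _ = m := by omega

theorem CycModel.idem_unique {x : S'} {κ ν : ℕ} (cm : CycModel S' x κ ν) {m m' : ℕ}
    (h : κ - 1 ≤ m ∧ ν ∣ (m + 1)) (h' : κ - 1 ≤ m' ∧ ν ∣ (m' + 1)) :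
    nsmul' S' m x = nsmul' S' m' x := by
  apply cm.per_eq h.1 h'.1
  have h1 : m + 1 ≡ m' + 1 [MOD ν] :=
    ((Nat.modEq_zero_iff_dvd).mpr h.2).trans ((Nat.modEq_zero_iff_dvd).mpr h'.2).symm
  exact Nat.ModEq.add_right_cancel' 1 h1

end Stmt5Aux

theorem CycModel.idem_iff' {S' : Type*} [AddCommSemigroup S'] {x : S'} {κ ν : ℕ}
    (cm : CycModel S' x κ ν) (m : ℕ) :
    (nsmul' S' (m + m + 1) x = nsmul' S' m x) ↔ (κ - 1 ≤ m ∧ ν ∣ (m + 1)) := by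
  rw [← nsmul'_add']; exact cm.idem_iff m

section PiLevel

variable {r : ℕ} {S : Fin (r + 1) → Type*} [∀ i, AddCommSemigroup (S i)]

theorem nsmul'_pi (m : ℕ) (s : ∀ i, S i) (i : Fin (r + 1)) :
    nsmul' (∀ j, S j) m s i = nsmul' (S i) m (s i) := by
  induction m with
  | zero => rfl
  | succ c ih =>
    show (s + nsmul' _ c s) i = _
    rw [Pi.add_apply, ih, ← nsmul'_succ']

theorem exists_rep {x : ∀ i, S i} (hgen : ∀ i, cyc (S i) (x i) = Set.univ) (s : ∀ i, S i) :
    ∃ m : Fin (r + 1) → ℕ, ∀ i, s i = nsmul' (S i) (m i) (x i) := by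
  choose m hm using fun i =>
    (show s i ∈ cyc (S i) (x i) from (hgen i).symm ▸ Set.mem_univ (s i))
  exact ⟨m, fun i => (hm i).symm⟩

/-- The common idempotent tuple `E`. -/
def Etup (x : ∀ i, S i) (k n : Fin (r + 1) → ℕ) : ∀ i, S i :=
  fun i => nsmul' (S i) (k i * n i - 1) (x i)

variable {x : ∀ i, S i} {k n : Fin (r + 1) → ℕ}

theorem Etup_exp_prop (cm : ∀ i, CycModel (S i) (x i) (k i) (n i)) (i : Fin (r + 1)) :
    k i - 1 ≤ k i * n i - 1 ∧ n i ∣ (k i * n i - 1) + 1 := by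
  have h1 : 1 ≤ k i := (cm i).hκ
  have h2 : 1 ≤ n i := (cm i).hν
  have h3 : k i * 1 ≤ k i * n i := Nat.mul_le_mul_left _ h2
  constructor
  · omega
  · rw [show (k i * n i - 1) + 1 = k i * n i by omega]
    exact ⟨k i, Nat.mul_comm _ _⟩

theorem pi_idem_iff (cm : ∀ i, CycModel (S i) (x i) (k i) (n i))
    (m : Fin (r + 1) → ℕ) (c : ℕ) :
    (nsmul' (∀ i, S i) c (fun i => nsmul' (S i) (m i) (x i)) +
       nsmul' (∀ i, S i) c (fun i => nsmul' (S i) (m i) (x i)) =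
       nsmul' (∀ i, S i) c (fun i => nsmul' (S i) (m i) (x i)))
    ↔ ∀ i, k i - 1 ≤ c * (m i + 1) + m i ∧ n i ∣ (c * (m i + 1) + m i) + 1 := by
  rw [nsmul'_add']
  constructor
  · intro h i
    have hc := congrFun h i
    rw [nsmul'_pi, nsmul'_pi, nsmul'_nsmul', nsmul'_nsmul'] at hc
    rw [show (c + c + 1) * (m i + 1) + m i =
        (c * (m i + 1) + m i) + (c * (m i + 1) + m i) + 1 by ring] at hc
    exact ((cm i).idem_iff' _).mp hc
  · intro h
    funext i
    rw [nsmul'_pi, nsmul'_pi, nsmul'_nsmul', nsmul'_nsmul']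
    rw [show (c + c + 1) * (m i + 1) + m i =
        (c * (m i + 1) + m i) + (c * (m i + 1) + m i) + 1 by ring]
    exact ((cm i).idem_iff' _).mpr (h i)

theorem eIdem_pi (cm : ∀ i, CycModel (S i) (x i) (k i) (n i))
    (hgen : ∀ i, cyc (S i) (x i) = Set.univ) (s : ∀ i, S i) :
    eIdem (∀ i, S i) s = Etup x k n := by
  obtain ⟨m, hm⟩ := exists_rep hgen s
  have hs : s = fun i => nsmul' (S i) (m i) (x i) := funext hm
  subst hs
  rw [eIdem]
  have hone : ∀ i, 1 ≤ n i := fun i => (cm i).hν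
  have hPpos : 1 ≤ ∏ i, n i := Finset.one_le_prod' (fun i _ => hone i)
  set c₀ : ℕ := (∏ i, n i) * ((∑ i, k i) + 1) - 1 with hc₀
  have hSk : 1 * ((∑ i, k i) + 1) ≤ (∏ i, n i) * ((∑ i, k i) + 1) :=
    Nat.mul_le_mul_right _ hPpos
  have hc₀1 : c₀ + 1 = (∏ i, n i) * ((∑ i, k i) + 1) := by omega
  have hc₀mem : c₀ ∈ {c : ℕ | nsmul' (∀ i, S i) c (fun i => nsmul' (S i) (m i) (x i)) +
      nsmul' (∀ i, S i) c (fun i => nsmul' (S i) (m i) (x i)) =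
      nsmul' (∀ i, S i) c (fun i => nsmul' (S i) (m i) (x i))} := by
    rw [Set.mem_setOf_eq, pi_idem_iff cm]
    intro i
    have hdvd : n i ∣ c₀ + 1 := hc₀1 ▸ Dvd.dvd.mul_right (Finset.dvd_prod_of_mem n (Finset.mem_univ i)) _
    have hki : k i ≤ ∑ j, k j := Finset.single_le_sum (fun j _ => Nat.zero_le (k j)) (Finset.mem_univ i)
    have hc₀big : k i ≤ c₀ := by omega
    constructor
    · have : c₀ * 1 ≤ c₀ * (m i + 1) := Nat.mul_le_mul_left _ (by omega)
      omega
    · rw [show c₀ * (m i + 1) + m i + 1 = (c₀ + 1) * (m i + 1) by ring]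
      exact hdvd.mul_right _
  have hne : Set.Nonempty {c : ℕ | nsmul' (∀ i, S i) c (fun i => nsmul' (S i) (m i) (x i)) +
      nsmul' (∀ i, S i) c (fun i => nsmul' (S i) (m i) (x i)) =
      nsmul' (∀ i, S i) c (fun i => nsmul' (S i) (m i) (x i))} := ⟨c₀, hc₀mem⟩
  have hmem := Nat.sInf_mem hne
  rw [Set.mem_setOf_eq, pi_idem_iff cm] at hmem
  funext i
  rw [nsmul'_pi, nsmul'_nsmul', Etup]
  exact (cm i).idem_unique (hmem i) (Etup_exp_prop cm i)

theorem Etup_add_Etup (cm : ∀ i, CycModel (S i) (x i) (k i) (n i)) :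
    Etup x k n + Etup x k n = Etup x k n := by
  funext i
  have he : Etup x k n i = nsmul' (S i) (k i * n i - 1) (x i) := rfl
  rw [Pi.add_apply, he, nsmul'_add']
  exact ((cm i).idem_iff' _).mpr (Etup_exp_prop cm i)

end PiLevel

section PsiMap

variable {r : ℕ} {S : Fin (r + 1) → Type*} [∀ i, AddCommSemigroup (S i)]
variable (x : ∀ i, S i) (k n : Fin (r + 1) → ℕ)

/-- The canonical embedding of `∏ ZMod (n i)` onto the maximal subgroup. -/
def psiT (g : ∀ i, ZMod (n i)) : ∀ i, S i :=
  fun i => nsmul' (S i) (k i * n i - 1 + (g i).val) (x i)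

variable {x k n}

theorem psiT_apply (g : ∀ i, ZMod (n i)) (i : Fin (r + 1)) :
    psiT x k n g i = nsmul' (S i) (k i * n i - 1 + (g i).val) (x i) := rfl

theorem psiT_add (cm : ∀ i, CycModel (S i) (x i) (k i) (n i)) (g h : ∀ i, ZMod (n i)) :
    psiT x k n (g + h) = psiT x k n g + psiT x k n h := by
  funext i
  haveI : NeZero (n i) := ⟨by have := (cm i).hν; omega⟩
  have hD := Etup_exp_prop cm i
  have hval : (g i + h i).val = ((g i).val + (h i).val) % n i := ZMod.val_add _ _
  have hgh : (g + h) i = g i + h i := rfl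
  rw [Pi.add_apply, psiT_apply, psiT_apply, psiT_apply, hgh, nsmul'_add', hval]
  obtain ⟨hD1, hD2⟩ := hD
  have hnpos : 0 < n i := (cm i).hν
  set D := k i * n i - 1 with hDdef
  have e0 : (D + 1) ≡ 0 [MOD n i] := (Nat.modEq_zero_iff_dvd).mpr hD2
  apply (cm i).per_eq
  · omega
  · omega
  · calc D + ((g i).val + (h i).val) % n i
        ≡ D + ((g i).val + (h i).val) [MOD n i] :=
          Nat.ModEq.add_left _ (Nat.mod_modEq _ _)
      _ = (D + (g i).val + (h i).val) + 0 := by omega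
      _ ≡ (D + (g i).val + (h i).val) + (D + 1) [MOD n i] :=
          Nat.ModEq.add_left _ e0.symm
      _ = D + (g i).val + (D + (h i).val) + 1 := by omega

theorem psiT_zero (cm : ∀ i, CycModel (S i) (x i) (k i) (n i)) :
    psiT x k n (0 : ∀ i, ZMod (n i)) = Etup x k n := by
  funext i
  haveI : NeZero (n i) := ⟨by have := (cm i).hν; omega⟩
  rw [psiT_apply]
  show nsmul' (S i) (k i * n i - 1 + (0 : ZMod (n i)).val) (x i) = _
  rw [ZMod.val_zero]
  rfl

theorem psiT_inj (cm : ∀ i, CycModel (S i) (x i) (k i) (n i)) :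
    Function.Injective (psiT x k n (S := S)) := by
  intro g h heq
  funext i
  haveI : NeZero (n i) := ⟨by have := (cm i).hν; omega⟩
  have hD := Etup_exp_prop cm i
  have hgi : (g i).val < n i := ZMod.val_lt _
  have hhi : (h i).val < n i := ZMod.val_lt _
  have hcomp := congrFun heq i
  rw [psiT_apply, psiT_apply] at hcomp
  have hval : (g i).val = (h i).val := by
    rcases Nat.lt_trichotomy ((g i).val) ((h i).val) with hlt | heqv | hgt
    · exfalso
      apply (cm i).window (d := (h i).val - (g i).val)
        (m := k i * n i - 1 + (g i).val) (by omega) (by omega) (by omega)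
      rw [show k i * n i - 1 + (g i).val + ((h i).val - (g i).val) =
          k i * n i - 1 + (h i).val by omega]
      exact hcomp
    · exact heqv
    · exfalso
      apply (cm i).window (d := (g i).val - (h i).val)
        (m := k i * n i - 1 + (h i).val) (by omega) (by omega) (by omega)
      rw [show k i * n i - 1 + (h i).val + ((g i).val - (h i).val) =
          k i * n i - 1 + (g i).val by omega]
      exact hcomp.symm
  exact ZMod.val_injective _ hval

theorem psiT_surj_shift (cm : ∀ i, CycModel (S i) (x i) (k i) (n i))
    (hgen : ∀ i, cyc (S i) (x i) = Set.univ) (s : ∀ i, S i) :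
    ∃ g : ∀ i, ZMod (n i), psiT x k n g = Etup x k n + s := by
  obtain ⟨m, hm⟩ := exists_rep hgen s
  refine ⟨fun i => ((m i + 1 : ℕ) : ZMod (n i)), ?_⟩
  funext i
  haveI : NeZero (n i) := ⟨by have := (cm i).hν; omega⟩
  have hD := Etup_exp_prop cm i
  have hval : (((m i + 1 : ℕ) : ZMod (n i))).val = (m i + 1) % n i := ZMod.val_natCast _ _
  rw [psiT_apply, Pi.add_apply]
  have he : Etup x k n i = nsmul' (S i) (k i * n i - 1) (x i) := rfl
  rw [he, hm i, nsmul'_add', hval]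
  obtain ⟨hD1, hD2⟩ := hD
  have hnpos : 0 < n i := (cm i).hν
  set D := k i * n i - 1 with hDdef
  apply (cm i).per_eq
  · omega
  · omega
  · calc D + (m i + 1) % n i ≡ D + (m i + 1) [MOD n i] :=
        Nat.ModEq.add_left _ (Nat.mod_modEq _ _)
      _ = D + m i + 1 := by omega

end PsiMap

section GroupSide

theorem nsmul'_smul {A : Type*} [AddCommMonoid A] (m : ℕ) (g : A) :
    nsmul' A m g = (m + 1) • g := by
  induction m with
  | zero => rw [nsmul'_zero', Nat.zero_add, one_nsmul]
  | succ c ih =>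
    rw [nsmul'_succ', ih, add_comm, ← succ_nsmul]

theorem eIdem_piZMod {r : ℕ} {n : Fin (r + 1) → ℕ} (hn : ∀ i, 1 ≤ n i)
    (g : ∀ i, ZMod (n i)) : eIdem (∀ i, ZMod (n i)) g = 0 := by
  have key : ∀ c : ℕ, (nsmul' (∀ i, ZMod (n i)) c g + nsmul' (∀ i, ZMod (n i)) c g =
      nsmul' (∀ i, ZMod (n i)) c g) ↔ nsmul' (∀ i, ZMod (n i)) c g = 0 := by
    intro c
    constructor
    · intro h
      exact add_eq_left.mp h
    · intro h; rw [h]; exact zero_add 0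
  have hPpos : 1 ≤ ∏ i, n i := Finset.one_le_prod' (fun i _ => hn i)
  have hzero : nsmul' (∀ i, ZMod (n i)) ((∏ i, n i) - 1) g = 0 := by
    rw [nsmul'_smul, show (∏ i, n i) - 1 + 1 = ∏ i, n i by omega]
    funext i
    obtain ⟨c, hc⟩ := Finset.dvd_prod_of_mem n (Finset.mem_univ i)
    rw [Pi.smul_apply, Pi.zero_apply, hc, mul_smul]
    have : (n i) • (c • g i) = (n i : ZMod (n i)) * (c • g i) := nsmul_eq_mul _ _
    rw [this, ZMod.natCast_self, zero_mul]
  have hne : Set.Nonempty {c : ℕ | nsmul' (∀ i, ZMod (n i)) c g +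
      nsmul' (∀ i, ZMod (n i)) c g = nsmul' (∀ i, ZMod (n i)) c g} :=
    ⟨(∏ i, n i) - 1, (key _).mpr hzero⟩
  have hmem := Nat.sInf_mem hne
  rw [Set.mem_setOf_eq, key] at hmem
  exact hmem

end GroupSide

section AlgebraId

variable {R : Type*} [CommRing R] {T : Type*} [AddCommSemigroup T]

theorem Xm_mul (s t : T) (c d : R) : Xm R s c * Xm R t d = Xm R (s + t) (c * d) := by
  rw [Xm, Xm, Xm, AddMonoidAlgebra.single_mul_single, ← WithZero.coe_add]

theorem facX_eq_s5 (s : T) (a : R) (e : T) (he : eIdem T s = e) :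
    facX R s a = Xm R s 1 - Xm R e a := by rw [facX, he]

theorem XE_mul_fac (e s : T) (he : e + e = e) (a : R) :
    Xm R e 1 * (Xm R s 1 - Xm R e a) = Xm R (e + s) 1 - Xm R e a := by
  rw [mul_sub, Xm_mul, Xm_mul, one_mul, one_mul, he]

theorem fac_split (e s : T) (he : e + e = e) (a : R) :
    Xm R s 1 - Xm R e a =
      Xm R e 1 * (Xm R s 1 - Xm R e a) + (Xm R s 1 - Xm R (e + s) 1) := by
  rw [XE_mul_fac e s he a]; abel

theorem nu_mul_XE (e s : T) (he : e + e = e) (c : R) :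
    (Xm R s 1 - Xm R (e + s) 1) * Xm R e c = 0 := by
  rw [sub_mul, Xm_mul, Xm_mul, one_mul,
    show e + s + e = s + e from by rw [add_comm e s, add_assoc, he], sub_self]

theorem nuprod_mul_XE (e : T) (he : e + e = e) {ℓ : ℕ} (s : Fin (ℓ + 1) → T) (c : R) :
    (∏ j, (Xm R (s j) 1 - Xm R (e + s j) 1)) * Xm R e c = 0 := by
  rw [Fin.prod_univ_succ, mul_right_comm, nu_mul_XE e _ he, zero_mul]

theorem master_id (e : T) (he : e + e = e) {ℓ : ℕ} (s : Fin (ℓ + 1) → T)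
    (a : Fin (ℓ + 1) → R) (hE : ∀ j, eIdem T (s j) = e) :
    ∏ j, facX R (s j) (a j) =
      Xm R e 1 * ∏ j, facX R (s j) (a j) +
        ∏ j, (Xm R (s j) 1 - Xm R (e + s j) 1) := by
  induction ℓ with
  | zero =>
    rw [Fin.prod_univ_one, Fin.prod_univ_one, facX_eq_s5 _ _ e (hE 0)]
    exact fac_split e (s 0) he (a 0)
  | succ m ih =>
    have IH := ih (fun j => s j.castSucc) (fun j => a j.castSucc) (fun j => hE _)
    have hFs := fac_split e (s (Fin.last (m + 1))) he (a (Fin.last (m + 1)))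
    have hz : (∏ j : Fin (m + 1), (Xm R (s j.castSucc) 1 - Xm R (e + s j.castSucc) 1)) *
        Xm R e 1 = 0 := nuprod_mul_XE e he _ 1
    rw [Fin.prod_univ_castSucc (f := fun j => facX R (s j) (a j)),
        Fin.prod_univ_castSucc (f := fun j => (Xm R (s j) 1 - Xm R (e + s j) 1)),
        facX_eq_s5 _ _ e (hE (Fin.last (m + 1)))]
    linear_combination (Xm R (s (Fin.last (m + 1))) 1 -
        Xm R e (a (Fin.last (m + 1)))) * IH +
      (∏ j : Fin (m + 1), (Xm R (s j.castSucc) 1 - Xm R (e + s j.castSucc) 1)) * hFs +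
      (Xm R (s (Fin.last (m + 1))) 1 - Xm R e (a (Fin.last (m + 1)))) * hz

/-- Sum of a nonempty tuple in a semigroup. -/
def sumT {T : Type*} [AddCommSemigroup T] : ∀ {ℓ : ℕ}, (Fin (ℓ + 1) → T) → T
  | 0, s => s 0
  | ℓ + 1, s => sumT (fun j => s j.castSucc) + s (Fin.last (ℓ + 1))

theorem nu_prod_eq (e : T) (he : e + e = e) {ℓ : ℕ} (s : Fin (ℓ + 1) → T) :
    ∏ j, (Xm R (s j) 1 - Xm R (e + s j) 1) = Xm R (sumT s) 1 - Xm R (e + sumT s) 1 := by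
  induction ℓ with
  | zero => rw [Fin.prod_univ_one]; rfl
  | succ m ih =>
    have h1 : sumT s = sumT (fun j => s j.castSucc) + s (Fin.last (m + 1)) := rfl
    rw [Fin.prod_univ_castSucc, ih (fun j => s j.castSucc)]
    rw [sub_mul, mul_sub, mul_sub, Xm_mul, Xm_mul, Xm_mul, Xm_mul, mul_one]
    have e1 : sumT (fun j => s j.castSucc) + (e + s (Fin.last (m + 1))) = e + sumT s := by
      rw [h1, add_left_comm]
    have e2 : (e + sumT (fun j => s j.castSucc)) + s (Fin.last (m + 1)) = e + sumT s := by
      rw [h1, add_assoc]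
    have e3 : (e + sumT (fun j => s j.castSucc)) + (e + s (Fin.last (m + 1))) = e + sumT s := by
      rw [add_add_add_comm, he, h1]
    rw [e1, e2, e3, ← h1]
    ring

end AlgebraId

section SumExp

variable {r : ℕ} {S : Fin (r + 1) → Type*} [∀ i, AddCommSemigroup (S i)]

theorem sumT_exp {x : ∀ i, S i} {ℓ : ℕ} (m : Fin (ℓ + 1) → Fin (r + 1) → ℕ) :
    sumT (fun j => fun i => nsmul' (S i) (m j i) (x i)) =
      fun i => nsmul' (S i) ((∑ j, (m j i + 1)) - 1) (x i) := by
  induction ℓ with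
  | zero =>
    funext i
    show nsmul' (S i) (m 0 i) (x i) = _
    rw [Fin.sum_univ_one]
    congr 1
  | succ c ih =>
    funext i
    show (sumT (fun j => fun i => nsmul' (S i) (m j.castSucc i) (x i)) +
        (fun i => nsmul' (S i) (m (Fin.last (c + 1)) i) (x i))) i = _
    rw [Pi.add_apply, ih (fun j => m j.castSucc), nsmul'_add', Fin.sum_univ_castSucc
      (f := fun j => m j i + 1)]
    have hpos : 0 < ∑ j : Fin (c + 1), (m j.castSucc i + 1) :=
      Finset.sum_pos (fun j _ => by omega) Finset.univ_nonempty
    congr 1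
    omega

end SumExp

section Transfer

/-- Extension of a map to `WithZero`. -/
def etaFun {G' T' : Type*} (f : G' → T') : WithZero G' → WithZero T' :=
  WithZero.recZeroCoe 0 (fun g => ↑(f g))

theorem etaFun_zero {G' T' : Type*} (f : G' → T') : etaFun f (0 : WithZero G') = 0 := rfl

theorem etaFun_coe {G' T' : Type*} (f : G' → T') (g : G') :
    etaFun f (↑g : WithZero G') = ↑(f g) := rfl

theorem etaFun_injective {G' T' : Type*} {f : G' → T'} (hf : Function.Injective f) :
    Function.Injective (etaFun f) := by
  intro a b hab
  induction a with
  | zero =>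
    induction b with
    | zero => rfl
    | coe h =>
      rw [etaFun_zero, etaFun_coe] at hab
      exact absurd hab.symm WithZero.coe_ne_zero
  | coe g =>
    induction b with
    | zero =>
      rw [etaFun_zero, etaFun_coe] at hab
      exact absurd hab WithZero.coe_ne_zero
    | coe h =>
      rw [etaFun_coe, etaFun_coe] at hab
      rw [hf (WithZero.coe_inj.mp hab)]

def etaW {G' T' : Type*} [AddCommSemigroup G'] [AddCommSemigroup T'] (f : G' → T')
    (hf : ∀ a b, f (a + b) = f a + f b) : WithZero G' →+ WithZero T' where
  toFun := etaFun f
  map_zero' := rfl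
  map_add' := by
    intro a b
    show etaFun f (a + b) = etaFun f a + etaFun f b
    induction a with
    | zero => rw [zero_add, etaFun_zero, zero_add]
    | coe g =>
      induction b with
      | zero => rw [add_zero, etaFun_zero, add_zero]
      | coe h =>
        rw [← WithZero.coe_add, etaFun_coe, etaFun_coe, etaFun_coe, hf, WithZero.coe_add]

theorem etaW_coe {G' T' : Type*} [AddCommSemigroup G'] [AddCommSemigroup T'] (f : G' → T')
    (hf : ∀ a b, f (a + b) = f a + f b) (g : G') : etaW f hf ↑g = ↑(f g) := rfl

theorem idem_pow {R : Type*} [CommRing R] {u : R} (hu : u * u = u) (m : ℕ) :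
    u ^ (m + 1) = u := by
  induction m with
  | zero => rw [pow_one]
  | succ c ih => rw [pow_succ, ih, hu]

variable {K : Type*} [Field K]

/-- The property of membership in the defining set of `dd`. -/
def memP (K : Type*) [Field K] (T : Type*) [AddCommSemigroup T] (ℓ : ℕ) : Prop :=
  ∃ s : Fin ℓ → T, ∀ a : Fin ℓ → K, (∀ i, a i ≠ 0) → ∏ i, facX K (s i) (a i) ≠ 0

theorem dd_def (T : Type*) [AddCommSemigroup T] :
    dd K T = sSup {nn : ℕ∞ | ∃ ℓ : ℕ, nn = (ℓ : ℕ∞) ∧ memP K T ℓ} := rfl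

theorem memP_zero (T : Type*) [AddCommSemigroup T] : memP K T 0 :=
  ⟨Fin.elim0, fun a _ => by
    rw [Finset.univ_eq_empty, Finset.prod_empty]; exact one_ne_zero⟩

theorem Xm_sub_ne {T : Type*} [AddCommSemigroup T] {u v : T} (h : u ≠ v) :
    Xm K u 1 - Xm K v 1 ≠ 0 := by
  intro h0
  have h1 : (Xm K u 1 - Xm K v 1).coeff ↑u = 1 := by
    rw [AddMonoidAlgebra.coeff_sub, Finsupp.sub_apply]
    rw [show (Xm K u 1).coeff ↑u = 1 from Finsupp.single_eq_same]
    rw [show (Xm K v 1).coeff ↑u = 0 from Finsupp.single_eq_of_ne' (fun hc => h (WithZero.coe_inj.mp hc).symm)]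
    rw [sub_zero]
  rw [h0] at h1
  exact one_ne_zero h1.symm

end Transfer

section Clause1

variable {r : ℕ} {S : Fin (r + 1) → Type*} [∀ i, AddCommSemigroup (S i)]
variable {x : ∀ i, S i} {k n : Fin (r + 1) → ℕ}
variable {K : Type*} [Field K]

theorem memT_low (cm : ∀ i, CycModel (S i) (x i) (k i) (n i))
    (hgen : ∀ i, cyc (S i) (x i) = Set.univ) (ℓ : ℕ)
    (hl : ℓ + 1 ≤ k (Fin.last r) - 1) : memP K (∀ i, S i) (ℓ + 1) := by
  refine ⟨fun _ => fun i => nsmul' (S i) 0 (x i), fun a _ hP => ?_⟩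
  have hmaster := master_id (R := K) (Etup x k n) (Etup_add_Etup cm)
    (fun _ => fun i => nsmul' (S i) 0 (x i)) a (fun _ => eIdem_pi cm hgen _)
  rw [hP, mul_zero, zero_add] at hmaster
  rw [nu_prod_eq _ (Etup_add_Etup cm), sumT_exp (fun _ _ => 0)] at hmaster
  have hsum : (∑ _j : Fin (ℓ + 1), ((0 : ℕ) + 1)) - 1 = ℓ := by simp
  rw [hsum] at hmaster
  refine Xm_sub_ne (K := K) ?_ hmaster.symm
  intro hc
  have hcomp := congrFun hc (Fin.last r)
  have he : (Etup x k n + fun i => nsmul' (S i) ℓ (x i)) (Fin.last r) =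
      nsmul' (S (Fin.last r)) (k (Fin.last r) * n (Fin.last r) - 1 + ℓ + 1) (x (Fin.last r)) := by
    rw [Pi.add_apply]
    show nsmul' _ (k (Fin.last r) * n (Fin.last r) - 1) _ + _ = _
    rw [nsmul'_add']
  rw [he] at hcomp
  have := (cm (Fin.last r)).low_inj (m := ℓ) hl hcomp
  have hD := Etup_exp_prop cm (Fin.last r)
  omega

theorem memG_to_memT (cm : ∀ i, CycModel (S i) (x i) (k i) (n i))
    (hgen : ∀ i, cyc (S i) (x i) = Set.univ) {ℓ : ℕ}
    (h : memP K (∀ i, ZMod (n i)) ℓ) : memP K (∀ i, S i) ℓ := by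
  obtain ⟨w, hw⟩ := h
  have hn : ∀ i, 1 ≤ n i := fun i => (cm i).hν
  set Φ := AddMonoidAlgebra.mapDomainRingHom K (etaW (psiT x k n) (psiT_add cm)) with hΦ
  refine ⟨fun j => psiT x k n (w j), fun a ha h0 => hw a ha ?_⟩
  have hfac : ∀ j, facX K (psiT x k n (w j)) (a j) = Φ (facX K (w j) (a j)) := by
    intro j
    rw [facX_eq_s5 _ _ _ (eIdem_pi cm hgen _), facX_eq_s5 _ _ _ (eIdem_piZMod hn _), map_sub]
    have h1 : Φ (Xm K (w j) 1) = Xm K (psiT x k n (w j)) 1 := AddMonoidAlgebra.mapDomain_single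
    have h2 : Φ (Xm K (0 : ∀ i, ZMod (n i)) (a j)) = Xm K (Etup x k n) (a j) := by
      rw [show Φ (Xm K (0 : ∀ i, ZMod (n i)) (a j)) =
        Xm K (psiT x k n 0) (a j) from AddMonoidAlgebra.mapDomain_single, psiT_zero cm]
    rw [h1, h2]
  have hprod : ∏ j, facX K (psiT x k n (w j)) (a j) = Φ (∏ j, facX K (w j) (a j)) := by
    rw [map_prod]
    exact Finset.prod_congr rfl (fun j _ => hfac j)
  rw [hprod] at h0
  have hinj : Function.Injective Φ := by
    have : Function.Injective (etaFun (psiT x k n)) := etaFun_injective (psiT_inj cm)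
    exact AddMonoidAlgebra.mapDomain_injective this
  have := hinj (h0.trans (map_zero Φ).symm)
  exact this

theorem memT_to_memG (cm : ∀ i, CycModel (S i) (x i) (k i) (n i))
    (hgen : ∀ i, cyc (S i) (x i) = Set.univ)
    (hmx : ∀ i, k i ≤ k (Fin.last r)) {ℓ : ℕ}
    (hk : k (Fin.last r) ≤ ℓ + 1)
    (h : memP K (∀ i, S i) (ℓ + 1)) : memP K (∀ i, ZMod (n i)) (ℓ + 1) := by
  obtain ⟨s, hs⟩ := h
  have hn : ∀ i, 1 ≤ n i := fun i => (cm i).hν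
  choose w hw using fun j => psiT_surj_shift cm hgen (s j)
  set Φ := AddMonoidAlgebra.mapDomainRingHom K (etaW (psiT x k n) (psiT_add cm)) with hΦ
  refine ⟨w, fun a ha h0 => hs a ha ?_⟩
  -- the nilpotent part vanishes
  choose m hm using fun j => exists_rep hgen (s j)
  have hsrep : s = fun j => fun i => nsmul' (S i) (m j i) (x i) :=
    funext fun j => funext fun i => hm j i
  have hQ : (∏ j, (Xm K (s j) 1 - Xm K (Etup x k n + s j) 1)) = 0 := by
    rw [nu_prod_eq _ (Etup_add_Etup cm), hsrep, sumT_exp m]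
    have hEσ : (Etup x k n + fun i => nsmul' (S i) ((∑ j, (m j i + 1)) - 1) (x i)) =
        fun i => nsmul' (S i) ((∑ j, (m j i + 1)) - 1) (x i) := by
      funext i
      rw [Pi.add_apply]
      show nsmul' _ (k i * n i - 1) _ + _ = _
      rw [nsmul'_add']
      obtain ⟨hD1, hD2⟩ := Etup_exp_prop cm i
      have hMbig : ℓ + 1 ≤ ∑ j, (m j i + 1) := by
        calc ℓ + 1 = ∑ _j : Fin (ℓ + 1), 1 := by simp
          _ ≤ ∑ j, (m j i + 1) := Finset.sum_le_sum (fun j _ => by omega)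
      have hki : k i ≤ k (Fin.last r) := hmx i
      set D := k i * n i - 1 with hD
      set M := (∑ j, (m j i + 1)) - 1 with hM
      apply (cm i).per_eq (by omega) (by omega)
      calc D + M + 1 = M + (D + 1) := by omega
        _ ≡ M + 0 [MOD n i] := Nat.ModEq.add_left _ ((Nat.modEq_zero_iff_dvd).mpr hD2)
        _ = M := by omega
    rw [hEσ, sub_self]
  have hmaster := master_id (R := K) (Etup x k n) (Etup_add_Etup cm) s a
    (fun _ => eIdem_pi cm hgen _)
  rw [hQ, add_zero] at hmaster
  -- the group part is Φ of the group product
  have hXP : Xm K (Etup x k n) 1 * ∏ j, facX K (s j) (a j) =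
      Φ (∏ j, facX K (w j) (a j)) := by
    rw [map_prod]
    have hfac : ∀ j, Φ (facX K (w j) (a j)) =
        Xm K (Etup x k n) 1 * facX K (s j) (a j) := by
      intro j
      rw [facX_eq_s5 _ _ _ (eIdem_piZMod hn _), map_sub]
      have h1 : Φ (Xm K (w j) 1) = Xm K (Etup x k n + s j) 1 := by
        rw [show Φ (Xm K (w j) 1) = Xm K (psiT x k n (w j)) 1 from AddMonoidAlgebra.mapDomain_single,
          hw j]
      have h2 : Φ (Xm K (0 : ∀ i, ZMod (n i)) (a j)) = Xm K (Etup x k n) (a j) := by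
        rw [show Φ (Xm K (0 : ∀ i, ZMod (n i)) (a j)) =
          Xm K (psiT x k n 0) (a j) from AddMonoidAlgebra.mapDomain_single, psiT_zero cm]
      rw [h1, h2, facX_eq_s5 _ _ _ (eIdem_pi cm hgen _), XE_mul_fac _ _ (Etup_add_Etup cm)]
    rw [Finset.prod_congr rfl (fun j _ => hfac j), Finset.prod_mul_distrib,
      Finset.prod_const, Finset.card_univ, Fintype.card_fin,
      idem_pow (by rw [Xm_mul, Etup_add_Etup cm, mul_one]) ℓ]
  rw [h0, map_zero] at hXP
  rw [hmaster, hXP]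

theorem clause1 (cm : ∀ i, CycModel (S i) (x i) (k i) (n i))
    (hgen : ∀ i, cyc (S i) (x i) = Set.univ)
    (hmx : ∀ i, k i ≤ k (Fin.last r)) :
    dd K (∀ i, S i) = max ((k (Fin.last r) : ℕ∞) - 1) (dd K (∀ i, ZMod (n i))) := by
  have hk1 : 1 ≤ k (Fin.last r) := (cm _).hκ
  have hcast : ((k (Fin.last r) : ℕ∞) - 1) = ((k (Fin.last r) - 1 : ℕ) : ℕ∞) :=
    (ENat.coe_sub _ 1).symm
  rw [dd_def (K := K) (∀ i, S i), dd_def (K := K) (∀ i, ZMod (n i))]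
  apply le_antisymm
  · apply sSup_le
    rintro nn ⟨ℓ, rfl, hmem⟩
    rcases Nat.lt_or_ge ℓ (k (Fin.last r)) with hlt | hge
    · refine le_max_of_le_left ?_
      rw [hcast]
      exact Nat.cast_le.mpr (by omega)
    · obtain ⟨ℓ', rfl⟩ : ∃ ℓ', ℓ = ℓ' + 1 := ⟨ℓ - 1, by omega⟩
      exact le_max_of_le_right
        (le_sSup ⟨ℓ' + 1, rfl, memT_to_memG cm hgen hmx (by omega) hmem⟩)
  · apply max_le
    · rw [hcast]
      rcases Nat.eq_zero_or_pos (k (Fin.last r) - 1) with h0 | hpos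
      · rw [h0, Nat.cast_zero]
        exact zero_le
      · obtain ⟨ℓ, hℓ⟩ : ∃ ℓ, k (Fin.last r) - 1 = ℓ + 1 := ⟨k (Fin.last r) - 2, by omega⟩
        rw [hℓ]
        exact le_sSup ⟨ℓ + 1, rfl, memT_low cm hgen ℓ (by omega)⟩
    · apply sSup_le
      rintro nn ⟨ℓ, rfl, hmem⟩
      exact le_sSup ⟨ℓ, rfl, memG_to_memT cm hgen hmem⟩

end Clause1

section GroupAlg

/-- Un-adjoining map `WithZero G → G`. -/
def unFun (G : Type*) [Zero G] : WithZero G → G := WithZero.recZeroCoe 0 id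

theorem unFun_zero (G : Type*) [Zero G] : unFun G (0 : WithZero G) = 0 := rfl

theorem unFun_coe {G : Type*} [Zero G] (g : G) : unFun G (↑g : WithZero G) = g := rfl

/-- Un-adjoining additive hom. -/
def unW (G : Type*) [AddCommMonoid G] : WithZero G →+ G where
  toFun := unFun G
  map_zero' := rfl
  map_add' := by
    intro a b
    show unFun G (a + b) = unFun G a + unFun G b
    induction a with
    | zero => rw [zero_add, unFun_zero, zero_add]
    | coe g =>
      induction b with
      | zero => rw [add_zero, unFun_zero, add_zero]
      | coe h => rw [← WithZero.coe_add, unFun_coe, unFun_coe, unFun_coe]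

variable {K : Type*} [Field K]

/-- The ring hom `K[X;G] → K[G]` collapsing the adjoined identity. -/
noncomputable def PhiW (K : Type*) [Field K] (G : Type*) [AddCommMonoid G] :
    SAlg K G →+* AddMonoidAlgebra K G :=
  AddMonoidAlgebra.mapDomainRingHom K (unW G)

theorem PhiW_eq_mapDomain {G : Type*} [AddCommMonoid G] (f : SAlg K G) :
    PhiW K G f = AddMonoidAlgebra.mapDomain (unFun G) f := rfl

/-- Monomial of the honest group algebra. -/
noncomputable def XG (K : Type*) [Field K] {G : Type*} [AddCommMonoid G] (g : G) (c : K) :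
    AddMonoidAlgebra K G := AddMonoidAlgebra.single g c

theorem XG_mul {G : Type*} [AddCommMonoid G] (g h : G) (c d : K) :
    XG K g c * XG K h d = XG K (g + h) (c * d) := AddMonoidAlgebra.single_mul_single _ _ _ _

theorem XG_one {G : Type*} [AddCommMonoid G] :
    (1 : AddMonoidAlgebra K G) = XG K 0 1 := AddMonoidAlgebra.one_def

theorem XG_neg {G : Type*} [AddCommMonoid G] (g : G) (c : K) :
    XG K g (-c) = - XG K g c := by
  show AddMonoidAlgebra.single g (-c) = - AddMonoidAlgebra.single g c
  exact AddMonoidAlgebra.single_neg g c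

theorem XG_eq_same {G : Type*} [AddCommMonoid G] (g : G) (c : K) :
    (XG K g c).coeff g = c := Finsupp.single_eq_same

theorem XG_eq_of_ne {G : Type*} [AddCommMonoid G] {g g' : G} (h : g ≠ g') (c : K) :
    (XG K g c).coeff g' = 0 := Finsupp.single_eq_of_ne' h

theorem PhiW_Xm {G : Type*} [AddCommMonoid G] (g : G) (c : K) :
    PhiW K G (Xm K g c) = XG K g c := by
  have h : PhiW K G (Xm K g c) = AddMonoidAlgebra.single (unFun G (↑g : WithZero G)) c :=
    AddMonoidAlgebra.mapDomain_single
  rw [unFun_coe] at h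
  exact h

/-- The span of the non-adjoined monomials. -/
def VS (K : Type*) [Field K] (G : Type*) [AddCommMonoid G] : Set (SAlg K G) :=
  {f | ↑f.coeff.support ⊆ Set.range (fun g : G => (↑g : WithZero G))}

theorem Xm_mem_VS {G : Type*} [AddCommMonoid G] (g : G) (c : K) : Xm K g c ∈ VS K G := by
  intro u hu
  have := Finsupp.support_single_subset (a := (↑g : WithZero G)) (b := c) hu
  rw [Finset.mem_singleton] at this
  exact this ▸ ⟨g, rfl⟩

theorem sub_mem_VS {G : Type*} [AddCommMonoid G] {f g : SAlg K G}
    (hf : f ∈ VS K G) (hg : g ∈ VS K G) : f - g ∈ VS K G := by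
  classical
  intro u hu
  have := Finsupp.support_sub (f := f.coeff) (g := g.coeff) hu
  rw [Finset.mem_union] at this
  rcases this with h | h
  · exact hf h
  · exact hg h

theorem mul_mem_VS {G : Type*} [AddCommMonoid G] {f g : SAlg K G}
    (hf : f ∈ VS K G) (hg : g ∈ VS K G) : f * g ∈ VS K G := by
  classical
  intro u hu
  have := AddMonoidAlgebra.support_coeff_mul_subset f g hu
  rw [Finset.mem_add] at this
  obtain ⟨y, hy, z, hz, rfl⟩ := this
  obtain ⟨a, rfl⟩ := hf hy
  obtain ⟨b, rfl⟩ := hg hz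
  exact ⟨a + b, (WithZero.coe_add a b).symm⟩

theorem prod_mem_VS {G : Type*} [AddCommMonoid G] {ℓ : ℕ} (F : Fin (ℓ + 1) → SAlg K G)
    (hF : ∀ j, F j ∈ VS K G) : (∏ j, F j) ∈ VS K G := by
  induction ℓ with
  | zero => rw [Fin.prod_univ_one]; exact hF 0
  | succ m ih =>
    rw [Fin.prod_univ_castSucc]
    exact mul_mem_VS (ih (fun j => F j.castSucc) (fun j => hF _)) (hF _)

theorem VS_inj {G : Type*} [AddCommMonoid G] {f : SAlg K G}
    (hf : f ∈ VS K G) (h0 : PhiW K G f = 0) : f = 0 := by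
  have hinj : Set.InjOn (unFun G) (Set.range (fun g : G => (↑g : WithZero G))) := by
    rintro _ ⟨a, rfl⟩ _ ⟨b, rfl⟩ h
    rw [unFun_coe, unFun_coe] at h
    rw [h]
  have H := Finsupp.mapDomain_injOn (M := K) (Set.range (fun g : G => (↑g : WithZero G))) hinj
  have h2 : (0 : WithZero G →₀ K) ∈ {w : WithZero G →₀ K |
      ↑w.support ⊆ Set.range (fun g : G => (↑g : WithZero G))} := by
    intro u hu
    simp at hu
  exact AddMonoidAlgebra.coeff_injective (H hf h2 (by
    have := congrArg AddMonoidAlgebra.coeff h0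
    rw [AddMonoidAlgebra.coeff_zero, Finsupp.mapDomain_zero]; exact this))

theorem prod_single' {G : Type*} [AddCommMonoid G] {ι : Type*} (t : Finset ι)
    (v : ι → G) (c : ι → K) :
    (∏ j ∈ t, XG K (v j) (c j)) = XG K (∑ j ∈ t, v j) (∏ j ∈ t, c j) := by
  classical
  induction t using Finset.cons_induction with
  | empty =>
    rw [Finset.prod_empty, Finset.sum_empty, Finset.prod_empty, ← XG_one]
  | cons a s ha ih =>
    rw [Finset.prod_cons, Finset.sum_cons, Finset.prod_cons, ih, XG_mul]

theorem zsf_prod_ne {G : Type*} [AddCommGroup G] {ℓ : ℕ} (w : Fin ℓ → G)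
    (hz : ∀ t : Finset (Fin ℓ), t.Nonempty → ∑ j ∈ t, w j ≠ 0) (a : Fin ℓ → K) :
    ∏ j, (XG K (w j) (1 : K) - XG K 0 (a j)) ≠ (0 : AddMonoidAlgebra K G) := by
  classical
  intro h0
  have hfac : ∀ j, XG K (w j) (1 : K) - XG K (0 : G) (a j) =
      XG K (w j) (1 : K) + XG K (0 : G) (-(a j)) := by
    intro j
    rw [XG_neg, sub_eq_add_neg]
  rw [Finset.prod_congr rfl (fun j _ => hfac j), Finset.prod_add] at h0
  have hterm : ∀ t ∈ Finset.univ.powerset (α := Fin ℓ),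
      ((∏ j ∈ t, XG K (w j) (1 : K)) * ∏ j ∈ Finset.univ \ t, XG K (0 : G) (-(a j))) =
      XG K (∑ j ∈ t, w j) (∏ j ∈ Finset.univ \ t, (-(a j))) := by
    intro t _
    rw [prod_single', prod_single', XG_mul,
      Finset.sum_const_zero, add_zero, Finset.prod_const_one, one_mul]
  rw [Finset.sum_congr rfl hterm] at h0
  have happ := congrArg (fun f => f.coeff (∑ j, w j)) h0
  rw [show ((∑ x ∈ Finset.univ.powerset,
        XG K (∑ j ∈ x, w j) (∏ j ∈ Finset.univ \ x, -(a j))).coeff (∑ j, w j)) =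
      ∑ x ∈ Finset.univ.powerset,
        (XG K (∑ j ∈ x, w j) (∏ j ∈ Finset.univ \ x, -(a j))).coeff (∑ j, w j) from by
    rw [AddMonoidAlgebra.coeff_sum, Finsupp.finset_sum_apply]] at happ
  rw [show ((0 : AddMonoidAlgebra K G).coeff (∑ j, w j)) = 0 from rfl] at happ
  rw [Finset.sum_eq_single_of_mem Finset.univ (Finset.mem_powerset_self _)] at happ
  · rw [XG_eq_same, Finset.sdiff_self, Finset.prod_empty] at happ
    exact one_ne_zero happ
  · intro t ht htne
    rw [Finset.mem_powerset] at ht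
    apply XG_eq_of_ne
    intro hc
    have hsd : ∑ j ∈ Finset.univ \ t, w j + ∑ j ∈ t, w j = ∑ j, w j :=
      Finset.sum_sdiff ht
    rw [hc] at hsd
    have hzero : ∑ j ∈ Finset.univ \ t, w j = 0 := by
      have := add_right_cancel (b := ∑ j, w j) (hsd.trans (zero_add _).symm)
      exact this
    refine hz (Finset.univ \ t) ?_ hzero
    rw [Finset.sdiff_nonempty]
    intro hsub
    exact htne (Finset.univ_subset_iff.mp hsub)

theorem nil_prod {R : Type*} [CommRing R] :
    ∀ (rr : ℕ) (v : Fin rr → R) (q : Fin rr → ℕ), (∀ i, v i ^ q i = 0) →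
    ∀ {ι : Type*} (t : Finset ι) (F : ι → R),
    (∀ j ∈ t, F j ∈ Ideal.span (Set.range v)) → (∑ i, (q i - 1)) + 1 ≤ t.card →
    ∏ j ∈ t, F j = 0 := by
  intro rr
  induction rr with
  | zero =>
    intro v q hv ι t F hF hcard
    have hc0 : 1 ≤ t.card := le_trans (by omega) hcard
    obtain ⟨j, hj⟩ := Finset.card_pos.mp (show 0 < t.card by omega)
    have hFj : F j = 0 := by
      have := hF j hj
      rw [Set.range_eq_empty v, Ideal.span_empty] at this
      simpa using this
    exact Finset.prod_eq_zero hj hFj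
  | succ rr ih =>
    intro v q hv ι t F hF hcard
    classical
    have hrange : Set.range v =
        Set.range (fun i : Fin rr => v i.castSucc) ∪ {v (Fin.last rr)} := by
      ext y
      constructor
      · rintro ⟨i, rfl⟩
        induction i using Fin.lastCases with
        | last => exact Or.inr rfl
        | cast i => exact Or.inl ⟨i, rfl⟩
      · rintro (⟨i, rfl⟩ | h)
        · exact ⟨i.castSucc, rfl⟩
        · exact ⟨Fin.last rr, (Set.mem_singleton_iff.mp h).symm⟩
    have hdec : ∀ j ∈ t, ∃ A c,
        A ∈ Ideal.span (Set.range (fun i : Fin rr => v i.castSucc)) ∧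
        A + c * v (Fin.last rr) = F j := by
      intro j hj
      have hFj := hF j hj
      rw [hrange, Ideal.span_union, Submodule.mem_sup] at hFj
      obtain ⟨A, hA, B, hB, hAB⟩ := hFj
      obtain ⟨c, hc⟩ := Ideal.mem_span_singleton'.mp hB
      exact ⟨A, c, hA, by rw [hc]; exact hAB⟩
    choose! A c hA hAc using hdec
    have hFeq : ∏ j ∈ t, F j = ∏ j ∈ t, (A j + c j * v (Fin.last rr)) :=
      Finset.prod_congr rfl (fun j hj => (hAc j hj).symm)
    rw [hFeq, Finset.prod_add]
    apply Finset.sum_eq_zero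
    intro u hu
    rw [Finset.mem_powerset] at hu
    rcases Nat.lt_or_ge ((t \ u).card) (q (Fin.last rr)) with hlt | hge
    · have hucard : (∑ i : Fin rr, (q i.castSucc - 1)) + 1 ≤ u.card := by
        have h1 : (t \ u).card = t.card - u.card := Finset.card_sdiff_of_subset hu
        have h2 : u.card ≤ t.card := Finset.card_le_card hu
        have h3 := hcard
        rw [Fin.sum_univ_castSucc (f := fun i => q i - 1)] at h3
        omega
      have hz := ih (fun i => v i.castSucc) (fun i => q i.castSucc)
        (fun i => hv i.castSucc) u A (fun j hj => hA j (hu hj)) hucard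
      rw [hz, zero_mul]
    · have hvz : v (Fin.last rr) ^ (t \ u).card = 0 := by
        rw [show (t \ u).card = q (Fin.last rr) + ((t \ u).card - q (Fin.last rr)) by omega,
          pow_add, hv (Fin.last rr), zero_mul]
      have hB0 : ∏ j ∈ t \ u, (c j * v (Fin.last rr)) = 0 := by
        rw [Finset.prod_mul_distrib, Finset.prod_const, hvz, mul_zero]
      rw [hB0, mul_zero]

end GroupAlg

section PGroupAlg

variable {K : Type*} [Field K]

/-- `X^g - 1` in the honest group algebra. -/
noncomputable def ueltP (K : Type*) [Field K] {G : Type*} [AddCommMonoid G] (g : G) :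
    AddMonoidAlgebra K G := XG K g 1 - 1

theorem ueltP_mul {G : Type*} [AddCommMonoid G] (g h : G) :
    ueltP K g * ueltP K h = ueltP K (g + h) - ueltP K g - ueltP K h := by
  have h1 : XG K g 1 * XG K h 1 = XG K (g + h) 1 := by rw [XG_mul, mul_one]
  unfold ueltP
  linear_combination h1

theorem ueltP_zero {G : Type*} [AddCommMonoid G] : ueltP K (0 : G) = 0 := by
  unfold ueltP
  rw [← XG_one, sub_self]

variable {r : ℕ} {n : Fin (r + 1) → ℕ}

theorem ueltP_mem (hn : ∀ i, 1 ≤ n i) (g : ∀ i, ZMod (n i)) :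
    ueltP K g ∈ Ideal.span (Set.range fun i =>
      ueltP K (Pi.single i (1 : ZMod (n i)) : ∀ j, ZMod (n j))) := by
  classical
  set J := Ideal.span (Set.range fun i =>
      ueltP K (Pi.single i (1 : ZMod (n i)) : ∀ j, ZMod (n j))) with hJ
  have hadd : ∀ a b : ∀ j, ZMod (n j), ueltP K a ∈ J → ueltP K b ∈ J →
      ueltP K (a + b) ∈ J := by
    intro a b ha hb
    have h2 : ueltP K (a + b) = ueltP K a + ueltP K b + ueltP K a * ueltP K b := by
      linear_combination - ueltP_mul (K := K) a b
    rw [h2]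
    exact add_mem (add_mem ha hb) (Ideal.mul_mem_right _ _ ha)
  have hsingle : ∀ (i : Fin (r + 1)) (c : ℕ),
      ueltP K ((c • Pi.single i (1 : ZMod (n i)) : ∀ j, ZMod (n j))) ∈ J := by
    intro i c
    induction c with
    | zero => rw [zero_nsmul, ueltP_zero]; exact zero_mem _
    | succ m ih =>
      rw [succ_nsmul]
      exact hadd _ _ ih (Ideal.subset_span ⟨i, rfl⟩)
  have hpi : ∀ i : Fin (r + 1), (Pi.single i (g i) : ∀ j, ZMod (n j)) =
      ((g i).val • Pi.single i (1 : ZMod (n i)) : ∀ j, ZMod (n j)) := by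
    intro i
    funext j
    by_cases hji : j = i
    · subst hji
      haveI : NeZero (n j) := ⟨by have := hn j; omega⟩
      rw [Pi.smul_apply, Pi.single_eq_same, Pi.single_eq_same, nsmul_eq_mul, mul_one,
        ZMod.natCast_val, ZMod.cast_id]
    · rw [Pi.smul_apply, Pi.single_eq_of_ne hji, Pi.single_eq_of_ne hji, smul_zero]
  have hsum : ∀ t : Finset (Fin (r + 1)),
      ueltP K (∑ i ∈ t, (Pi.single i (g i) : ∀ j, ZMod (n j))) ∈ J := by
    intro t
    induction t using Finset.cons_induction with
    | empty => rw [Finset.sum_empty, ueltP_zero]; exact zero_mem _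
    | cons a s ha ih =>
      rw [Finset.sum_cons]
      exact hadd _ _ (by rw [hpi a]; exact hsingle a _) ih
  have := hsum Finset.univ
  rwa [Finset.univ_sum_single] at this

theorem nsmul_single_self (hn : ∀ i, 1 ≤ n i) (i : Fin (r + 1)) :
    (n i) • (Pi.single i (1 : ZMod (n i)) : ∀ j, ZMod (n j)) = 0 := by
  funext j
  by_cases hji : j = i
  · subst hji
    rw [Pi.smul_apply, Pi.single_eq_same, nsmul_eq_mul, mul_one, ZMod.natCast_self]
    rfl
  · rw [Pi.smul_apply, Pi.single_eq_of_ne hji, smul_zero]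
    rfl

theorem ueltP_eps_pow (hn : ∀ i, 1 ≤ n i) {p : ℕ} (hp : p.Prime) [CharP K p]
    (hpow : ∀ i, ∃ t : ℕ, n i = p ^ t) (i : Fin (r + 1)) :
    ueltP K (Pi.single i (1 : ZMod (n i)) : ∀ j, ZMod (n j)) ^ (n i) = 0 := by
  haveI : Fact p.Prime := ⟨hp⟩
  haveI : CharP (AddMonoidAlgebra K (∀ j, ZMod (n j))) p :=
    charP_of_injective_ringHom
      (f := AddMonoidAlgebra.singleZeroRingHom)
      (fun a b h => AddMonoidAlgebra.single_right_injective h) p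
  obtain ⟨t, ht⟩ := hpow i
  unfold ueltP
  set B := XG K (Pi.single i (1 : ZMod (n i)) : ∀ j, ZMod (n j)) 1 with hB
  rw [ht, sub_pow_char_pow, one_pow]
  have hXG : B ^ p ^ t =
      XG K ((p ^ t) • (Pi.single i (1 : ZMod (n i)) : ∀ j, ZMod (n j))) 1 := by
    rw [hB]
    show AddMonoidAlgebra.single _ _ ^ _ = AddMonoidAlgebra.single _ _
    rw [AddMonoidAlgebra.single_pow, one_pow]
  rw [hXG, ← ht, nsmul_single_self hn i, ← XG_one, sub_self]

theorem charp_facX_prod_zero (hn : ∀ i, 1 ≤ n i) {p : ℕ} (hp : p.Prime) [CharP K p]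
    (hpow : ∀ i, ∃ t : ℕ, n i = p ^ t) {ℓ : ℕ}
    (hl : (∑ i, (n i - 1)) + 1 ≤ ℓ) (w : Fin ℓ → (∀ i, ZMod (n i))) :
    ∏ j, facX K (w j) (1 : K) = 0 := by
  obtain ⟨ℓ', rfl⟩ : ∃ ℓ', ℓ = ℓ' + 1 := ⟨ℓ - 1, by omega⟩
  have hfac : ∀ j, facX K (w j) (1 : K) =
      Xm K (w j) 1 - Xm K (0 : ∀ i, ZMod (n i)) 1 :=
    fun j => facX_eq_s5 _ _ _ (eIdem_piZMod hn _)
  have hmem : (∏ j, facX K (w j) (1 : K)) ∈ VS K (∀ i, ZMod (n i)) :=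
    prod_mem_VS _ (fun j => by
      rw [hfac]; exact sub_mem_VS (Xm_mem_VS _ _) (Xm_mem_VS _ _))
  apply VS_inj hmem
  rw [map_prod]
  have hPhi : ∀ j, PhiW K (∀ i, ZMod (n i)) (facX K (w j) 1) = ueltP K (w j) := by
    intro j
    rw [hfac j, map_sub, PhiW_Xm, PhiW_Xm]
    unfold ueltP
    rw [← XG_one]
  rw [Finset.prod_congr rfl (fun j _ => hPhi j)]
  exact nil_prod (r + 1) (fun i => ueltP K (Pi.single i 1)) n
    (fun i => ueltP_eps_pow hn hp hpow i) Finset.univ _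
    (fun j _ => ueltP_mem hn (w j))
    (by rw [Finset.card_univ, Fintype.card_fin]; exact hl)

theorem memG_of_zsf (hn : ∀ i, 1 ≤ n i) {ℓ : ℕ} (w : Fin ℓ → (∀ i, ZMod (n i)))
    (hz : ∀ t : Finset (Fin ℓ), t.Nonempty → ∑ j ∈ t, w j ≠ 0) :
    memP K (∀ i, ZMod (n i)) ℓ := by
  refine ⟨w, fun a _ h0 => ?_⟩
  apply zsf_prod_ne w hz a
  have hph := congrArg (PhiW K (∀ i, ZMod (n i))) h0
  rw [map_prod, map_zero] at hph
  rw [← hph]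
  apply Finset.prod_congr rfl
  intro j _
  rw [facX_eq_s5 _ _ _ (eIdem_piZMod hn _), map_sub, PhiW_Xm, PhiW_Xm]

end PGroupAlg

section DavStuff

theorem enat_sub_one_le_of {a X : ℕ∞} (h : ∀ m : ℕ, (m : ℕ∞) < a → (m : ℕ∞) ≤ X) :
    a - 1 ≤ X := by
  cases a using ENat.recTopCoe with
  | top =>
    have hX : X = ⊤ := by
      by_contra hne
      obtain ⟨c, hc⟩ := WithTop.ne_top_iff_exists.mp hne
      have hle := h (c + 1) (ENat.coe_lt_top _)
      rw [← hc] at hle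
      exact absurd (Nat.cast_le.mp hle) (by omega)
    rw [hX]
    exact le_top
  | coe d =>
    match d with
    | 0 => simp
    | d + 1 =>
      have hle := h d (Nat.cast_lt.mpr (by omega))
      have hsub : ((d + 1 : ℕ) : ℕ∞) - 1 = ((d : ℕ) : ℕ∞) := by
        rw [show (1 : ℕ∞) = ((1 : ℕ) : ℕ∞) from rfl, ← ENat.coe_sub]
        norm_num
      rw [hsub]
      exact hle

theorem card_sum_replicate {G : Type*} {r : ℕ} (f : Fin (r + 1) → ℕ) (v : Fin (r + 1) → G) :
    Multiset.card (∑ i, Multiset.replicate (f i) (v i)) = ∑ i, f i := by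
  classical
  have : ∀ t : Finset (Fin (r + 1)),
      Multiset.card (∑ i ∈ t, Multiset.replicate (f i) (v i)) = ∑ i ∈ t, f i := by
    intro t
    induction t using Finset.cons_induction with
    | empty => simp
    | cons a s ha ih => rw [Finset.sum_cons, Finset.sum_cons, Multiset.card_add,
        Multiset.card_replicate, ih]
  exact this Finset.univ

variable {r : ℕ} {n : Fin (r + 1) → ℕ}

theorem zsfT0 (hn : ∀ i, 1 ≤ n i) (T' : Multiset (∀ i, ZMod (n i)))
    (hle : T' ≤ ∑ i, Multiset.replicate (n i - 1)
      (Pi.single i (1 : ZMod (n i)) : ∀ j, ZMod (n j)))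
    (hne : T' ≠ 0) : T'.sum ≠ 0 := by
  classical
  obtain ⟨a, ha⟩ := Multiset.exists_mem_of_ne_zero hne
  have haT0 := Multiset.mem_of_le hle ha
  rw [Multiset.mem_sum] at haT0
  obtain ⟨i₀, _, hai⟩ := haT0
  rw [Multiset.mem_replicate] at hai
  obtain ⟨hni₀, rfl⟩ := hai
  have hn2 : 2 ≤ n i₀ := by have := hn i₀; omega
  -- elements of T' are epsilons
  have hmem : ∀ x ∈ T', ∃ j, x = (Pi.single j (1 : ZMod (n j)) : ∀ i, ZMod (n i)) := by
    intro x hx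
    have := Multiset.mem_of_le hle hx
    rw [Multiset.mem_sum] at this
    obtain ⟨j, _, hj⟩ := this
    rw [Multiset.mem_replicate] at hj
    exact ⟨j, hj.2⟩
  -- epsilon distinctness at i₀
  have heps : ∀ j, (Pi.single j (1 : ZMod (n j)) : ∀ i, ZMod (n i)) =
      (Pi.single i₀ (1 : ZMod (n i₀)) : ∀ i, ZMod (n i)) → j = i₀ := by
    intro j hj
    by_contra hne'
    have := congrFun hj i₀
    rw [Pi.single_eq_same, Pi.single_eq_of_ne (show i₀ ≠ j from fun h => hne' h.symm)] at this
    have h1 : ((1 : ℕ) : ZMod (n i₀)) = 0 := by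
      rw [Nat.cast_one]; exact this.symm
    rw [ZMod.natCast_eq_zero_iff] at h1
    have := Nat.le_of_dvd (by omega) h1
    omega
  -- value of elements at i₀
  have hval : ∀ x ∈ T', x i₀ = if x = (Pi.single i₀ (1 : ZMod (n i₀)) : ∀ i, ZMod (n i))
      then (1 : ZMod (n i₀)) else 0 := by
    intro x hx
    obtain ⟨j, rfl⟩ := hmem x hx
    by_cases hj : (Pi.single j (1 : ZMod (n j)) : ∀ i, ZMod (n i)) =
        (Pi.single i₀ (1 : ZMod (n i₀)) : ∀ i, ZMod (n i))
    · rw [if_pos hj, hj, Pi.single_eq_same]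
    · rw [if_neg hj]
      have hji : j ≠ i₀ := fun h => hj (by rw [h])
      exact Pi.single_eq_of_ne (show i₀ ≠ j from fun h => hji h.symm) 1
  -- count bound
  set c := T'.count (Pi.single i₀ (1 : ZMod (n i₀)) : ∀ i, ZMod (n i)) with hc
  have hc1 : 1 ≤ c := Multiset.one_le_count_iff_mem.mpr ha
  have hcle : c ≤ n i₀ - 1 := by
    have h1 := Multiset.count_le_of_le
      (Pi.single i₀ (1 : ZMod (n i₀)) : ∀ i, ZMod (n i)) hle
    rw [Multiset.count_sum'] at h1
    have h2 : ∀ j : Fin (r + 1), Multiset.count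
        (Pi.single i₀ (1 : ZMod (n i₀)) : ∀ i, ZMod (n i))
        (Multiset.replicate (n j - 1) (Pi.single j (1 : ZMod (n j)) : ∀ i, ZMod (n i))) =
        if j = i₀ then n j - 1 else 0 := by
      intro j
      rw [Multiset.count_replicate]
      by_cases hj : (Pi.single j (1 : ZMod (n j)) : ∀ i, ZMod (n i)) =
          (Pi.single i₀ (1 : ZMod (n i₀)) : ∀ i, ZMod (n i))
      · rw [if_pos hj, if_pos (heps j hj)]
      · rw [if_neg hj, if_neg (fun h => hj (by rw [h]))]
    rw [Finset.sum_congr rfl (fun j _ => h2 j), Finset.sum_ite_eq' Finset.univ i₀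
      (fun j => n j - 1)] at h1
    rw [if_pos (Finset.mem_univ i₀)] at h1
    exact le_trans h1 (le_refl _)
  -- component of the sum
  intro hsum0
  have hcomp : (T'.sum) i₀ = 0 := by rw [hsum0]; rfl
  have hsum : (T'.sum) i₀ = c • (1 : ZMod (n i₀)) := by
    have h1 : (T'.sum) i₀ = (Multiset.map (fun x : ∀ i, ZMod (n i) => x i₀) T').sum := by
      have := map_multiset_sum (Pi.evalAddMonoidHom (fun i => ZMod (n i)) i₀) T'
      exact this
    rw [h1, Finset.sum_multiset_map_count]
    have h2 : ∀ m ∈ T'.toFinset, T'.count m • (m i₀) =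
        if m = (Pi.single i₀ (1 : ZMod (n i₀)) : ∀ i, ZMod (n i))
        then c • (1 : ZMod (n i₀)) else 0 := by
      intro m hm
      rw [Multiset.mem_toFinset] at hm
      rw [hval m hm]
      by_cases hmeq : m = (Pi.single i₀ (1 : ZMod (n i₀)) : ∀ i, ZMod (n i))
      · rw [if_pos hmeq, if_pos hmeq, hmeq, ← hc]
      · rw [if_neg hmeq, if_neg hmeq, smul_zero]
    rw [Finset.sum_congr rfl h2, Finset.sum_ite_eq' T'.toFinset _
      (fun _ => c • (1 : ZMod (n i₀))), if_pos (Multiset.mem_toFinset.mpr ha)]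
  rw [hsum] at hcomp
  have : ((c : ℕ) : ZMod (n i₀)) = 0 := by
    rw [← hcomp, nsmul_eq_mul, mul_one]
  rw [ZMod.natCast_eq_zero_iff] at this
  have := Nat.le_of_dvd (by omega) this
  omega

theorem davG_ge (hn : ∀ i, 1 ≤ n i) :
    (((∑ i, (n i - 1)) + 1 : ℕ) : ℕ∞) ≤ DavG (∀ i, ZMod (n i)) := by
  apply le_sInf
  intro b hb
  by_contra hlt
  rw [not_le] at hlt
  have hbne : b ≠ ⊤ := fun h => by rw [h] at hlt; exact absurd hlt (by simp)
  obtain ⟨m, hm⟩ := WithTop.ne_top_iff_exists.mp hbne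
  set T₀ : Multiset (∀ i, ZMod (n i)) :=
    ∑ i, Multiset.replicate (n i - 1) (Pi.single i (1 : ZMod (n i)) : ∀ j, ZMod (n j))
    with hT₀
  have hcard : Multiset.card T₀ = ∑ i, (n i - 1) := card_sum_replicate _ _
  rw [← hm] at hlt
  have hmle : m ≤ ∑ i, (n i - 1) := Nat.lt_succ_iff.mp (Nat.cast_lt.mp hlt)
  have hmem := hb T₀ (by
    rw [hcard, ← hm]
    exact Nat.cast_le.mpr hmle)
  obtain ⟨T', hle, hne, hzero⟩ := hmem
  exact zsfT0 hn T' hle hne hzero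

theorem exists_zsf_of_lt_dav {G : Type*} [AddCommMonoid G] {m : ℕ}
    (h : (m : ℕ∞) < DavG G) :
    ∃ T : Multiset G, m ≤ Multiset.card T ∧
      ¬ ∃ T' : Multiset G, T' ≤ T ∧ T' ≠ 0 ∧ T'.sum = 0 := by
  by_contra hc
  push_neg at hc
  have hmem : (m : ℕ∞) ∈ {nn : ℕ∞ | ∀ T : Multiset G, (Multiset.card T : ℕ∞) ≥ nn →
      ∃ T' : Multiset G, T' ≤ T ∧ T' ≠ 0 ∧ T'.sum = 0} := by
    intro T hT
    exact hc T (Nat.cast_le.mp hT)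
  exact absurd (sInf_le hmem) (not_le.mpr h)

theorem zsf_of_multiset {G : Type*} [AddCommMonoid G] (T : Multiset G)
    (hT : ¬ ∃ T' : Multiset G, T' ≤ T ∧ T' ≠ 0 ∧ T'.sum = 0) (m : ℕ)
    (hm : m ≤ Multiset.card T) :
    ∃ w : Fin m → G, ∀ t : Finset (Fin m), t.Nonempty → ∑ j ∈ t, w j ≠ 0 := by
  classical
  have hlen : T.toList.length = Multiset.card T := Multiset.length_toList T
  have hm' : m ≤ T.toList.length := by omega
  refine ⟨fun j => T.toList.get (Fin.castLE hm' j), ?_⟩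
  intro t ht hsum
  apply hT
  set emb : Fin m ↪ Fin T.toList.length := ⟨Fin.castLE hm', Fin.castLE_injective hm'⟩
    with hemb
  refine ⟨Multiset.map T.toList.get (t.map emb).val, ?_, ?_, ?_⟩
  · have h1 : (t.map emb).val ≤ (Finset.univ : Finset (Fin T.toList.length)).val :=
      Finset.val_le_iff.mpr (Finset.subset_univ _)
    have h2 := Multiset.map_le_map (f := T.toList.get) h1
    rwa [Fin.univ_val_map, List.ofFn_get, Multiset.coe_toList] at h2
  · intro h0
    rw [Multiset.map_eq_zero] at h0
    obtain ⟨j, hj⟩ := ht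
    have : emb j ∈ (t.map emb) := Finset.mem_map_of_mem emb hj
    rw [← Finset.mem_val, h0] at this
    simp at this
  · rw [← Finset.sum_eq_multiset_sum, Finset.sum_map]
    exact hsum

theorem ddG_ge_dav {K : Type*} [Field K] (hn : ∀ i, 1 ≤ n i) :
    DavG (∀ i, ZMod (n i)) - 1 ≤ dd K (∀ i, ZMod (n i)) := by
  rw [dd_def (K := K) (∀ i, ZMod (n i))]
  apply enat_sub_one_le_of
  intro m hm
  obtain ⟨T, hTc, hT⟩ := exists_zsf_of_lt_dav hm
  obtain ⟨w, hw⟩ := zsf_of_multiset T hT m hTc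
  exact le_sSup ⟨m, rfl, memG_of_zsf hn w hw⟩

theorem davG_le_charp {K : Type*} [Field K] (hn : ∀ i, 1 ≤ n i) {p : ℕ}
    (hp : p.Prime) [CharP K p] (hpow : ∀ i, ∃ t : ℕ, n i = p ^ t) :
    DavG (∀ i, ZMod (n i)) ≤ (((∑ i, (n i - 1)) + 1 : ℕ) : ℕ∞) := by
  apply sInf_le
  intro T hT
  by_contra hno
  push_neg at hno
  have hT' : ¬ ∃ T' : Multiset (∀ i, ZMod (n i)), T' ≤ T ∧ T' ≠ 0 ∧ T'.sum = 0 := by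
    rintro ⟨T', h1, h2, h3⟩
    exact (hno T' h1 h2) h3
  have hcard : (∑ i, (n i - 1)) + 1 ≤ Multiset.card T := Nat.cast_le.mp hT
  obtain ⟨w, hw⟩ := zsf_of_multiset T hT' _ hcard
  have hzero := charp_facX_prod_zero (K := K) hn hp hpow (le_refl _) w
  -- but the product is nonzero by zsf
  have hne := zsf_prod_ne (K := K) w hw (fun _ => 1)
  apply hne
  have hph := congrArg (PhiW K (∀ i, ZMod (n i))) hzero
  rw [map_prod, map_zero] at hph
  rw [← hph]
  apply Finset.prod_congr rfl
  intro j _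
  rw [facX_eq_s5 _ _ _ (eIdem_piZMod hn _), map_sub, PhiW_Xm, PhiW_Xm]

theorem ddG_eq_charp {K : Type*} [Field K] (hn : ∀ i, 1 ≤ n i) {p : ℕ}
    (hp : p.Prime) [CharP K p] (hpow : ∀ i, ∃ t : ℕ, n i = p ^ t) :
    dd K (∀ i, ZMod (n i)) = DavG (∀ i, ZMod (n i)) - 1 := by
  have hM := le_antisymm (davG_le_charp (K := K) hn hp hpow) (davG_ge hn)
  apply le_antisymm
  · rw [dd_def (K := K) (∀ i, ZMod (n i))]
    apply sSup_le
    rintro nn ⟨ℓ, rfl, hmem⟩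
    obtain ⟨s, hs⟩ := hmem
    have hub : ℓ ≤ ∑ i, (n i - 1) := by
      by_contra hgt
      have hzero := charp_facX_prod_zero (K := K) hn hp hpow
        (show (∑ i, (n i - 1)) + 1 ≤ ℓ by omega) s
      exact hs (fun _ => 1) (fun _ => one_ne_zero) hzero
    rw [hM]
    have : (((∑ i, (n i - 1)) + 1 : ℕ) : ℕ∞) - 1 = ((∑ i, (n i - 1) : ℕ) : ℕ∞) := by
      rw [show (1 : ℕ∞) = ((1 : ℕ) : ℕ∞) from rfl, ← ENat.coe_sub]
      norm_num
    rw [this]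
    exact Nat.cast_le.mpr hub
  · exact ddG_ge_dav hn

end DavStuff

section Cyclic0

theorem davG_le_card {G : Type*} [AddCommGroup G] [Fintype G] [DecidableEq G] :
    DavG G ≤ (Fintype.card G : ℕ∞) := by
  apply sInf_le
  intro T hT
  have hlen : T.toList.length = Multiset.card T := Multiset.length_toList T
  have hcard : Fintype.card G < T.toList.length + 1 := by
    have := Nat.cast_le.mp hT
    omega
  have hpig := Fintype.exists_ne_map_eq_of_card_lt
    (fun j : Fin (T.toList.length + 1) => ((T.toList.take (j : ℕ)).sum)) (by
      rw [Fintype.card_fin]; exact hcard)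
  obtain ⟨a, b, hab, hsum⟩ := hpig
  suffices h : ∀ a b : Fin (T.toList.length + 1), (a : ℕ) < (b : ℕ) →
      ((T.toList.take (a : ℕ)).sum = (T.toList.take (b : ℕ)).sum) →
      ∃ T' ≤ T, T' ≠ 0 ∧ T'.sum = 0 by
    rcases lt_or_gt_of_ne (Fin.val_injective.ne hab) with h' | h'
    · exact h a b h' hsum
    · exact h b a h' hsum.symm
  intro a b hab' hsums
  refine ⟨↑((T.toList.drop (a : ℕ)).take ((b : ℕ) - (a : ℕ))), ?_, ?_, ?_⟩
  · have hs : ((T.toList.drop (a : ℕ)).take ((b : ℕ) - (a : ℕ))).Sublist T.toList :=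
      (List.take_sublist _ _).trans (List.drop_sublist _ _)
    conv_rhs => rw [show T = (↑T.toList : Multiset G) from (Multiset.coe_toList T).symm]
    exact Multiset.coe_le.mpr hs.subperm
  · intro h0
    rw [Multiset.coe_eq_zero] at h0
    have hlength := congrArg List.length h0
    rw [List.length_take, List.length_drop, List.length_nil] at hlength
    have hb := Fin.is_le b
    omega
  · have htake : T.toList.take (b : ℕ) =
        T.toList.take (a : ℕ) ++ (T.toList.drop (a : ℕ)).take ((b : ℕ) - (a : ℕ)) := by
      rw [← List.take_add]
      congr 1
      omega
    rw [htake, List.sum_append] at hsums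
    rw [Multiset.sum_coe]
    exact left_eq_add.mp hsums

theorem pow_mod_eq {K : Type*} [Field K] {ζ : K} {N : ℕ} (hζN : ζ ^ N = 1) (x : ℕ) :
    ζ ^ (x % N) = ζ ^ x := by
  conv_rhs => rw [← Nat.div_add_mod x N]
  rw [pow_add, pow_mul, hζN, one_pow, one_mul]

variable {K : Type*} [Field K] {n : Fin 1 → ℕ}

/-- The character of the cyclic group attached to `c`. -/
noncomputable def chiF [NeZero (n 0)] (ζ : K) (hζN : ζ ^ (n 0) = 1)
    (c : ∀ i, ZMod (n i)) : Multiplicative (∀ i, ZMod (n i)) →* K where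
  toFun := fun g => ζ ^ ((c 0 * (Multiplicative.toAdd g) 0).val)
  map_one' := by
    show ζ ^ ((c 0 * (Multiplicative.toAdd (1 : Multiplicative (∀ i, ZMod (n i)))) 0).val) = 1
    rw [show (Multiplicative.toAdd (1 : Multiplicative (∀ i, ZMod (n i)))) 0 = 0 from rfl,
      mul_zero, ZMod.val_zero, pow_zero]
  map_mul' := by
    intro g h
    show ζ ^ ((c 0 * (Multiplicative.toAdd (g * h)) 0).val) =
      ζ ^ ((c 0 * (Multiplicative.toAdd g) 0).val) *
        ζ ^ ((c 0 * (Multiplicative.toAdd h) 0).val)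
    have hgh : (Multiplicative.toAdd (g * h)) 0 =
        (Multiplicative.toAdd g) 0 + (Multiplicative.toAdd h) 0 := rfl
    rw [hgh, mul_add, ZMod.val_add, pow_mod_eq hζN, pow_add]

theorem chiF_apply [NeZero (n 0)] (ζ : K) (hζN : ζ ^ (n 0) = 1)
    (c g : ∀ i, ZMod (n i)) :
    chiF ζ hζN c (Multiplicative.ofAdd g) = ζ ^ ((c 0 * g 0).val) := rfl

theorem char_sep [NeZero (n 0)] (hn : ∀ i, 1 ≤ n i) {ζ : K}
    (hζ : IsPrimitiveRoot ζ (n 0)) (f : AddMonoidAlgebra K (∀ i, ZMod (n i)))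
    (hf : ∀ c : ∀ i, ZMod (n i),
      (AddMonoidAlgebra.lift K K (∀ i, ZMod (n i)))
        (chiF (n := n) ζ hζ.pow_eq_one c) f = 0) :
    f = 0 := by
  classical
  haveI : ∀ i, NeZero (n i) := fun i => ⟨by have := hn i; omega⟩
  have gdet : ∀ g h : ∀ i, ZMod (n i), g 0 = h 0 → g = h := by
    intro g h hgh
    funext i
    have hi : i = 0 := Subsingleton.elim i 0
    subst hi
    exact hgh
  have hcardG : Fintype.card (∀ i, ZMod (n i)) = n 0 := by
    rw [Fintype.card_pi, Fin.prod_univ_one, ZMod.card]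
  set e := Fintype.equivFinOfCardEq hcardG with he
  set x : (∀ i, ZMod (n i)) → K := fun g => ζ ^ ((g 0).val) with hx
  have hxinj : Function.Injective x := by
    intro g h hgh
    apply gdet
    have := hζ.pow_inj (ZMod.val_lt (g 0)) (ZMod.val_lt (h 0)) hgh
    exact ZMod.val_injective _ this
  set v : Fin (n 0) → K := fun t => x (e.symm t) with hv
  have hvinj : Function.Injective v := hxinj.comp e.symm.injective
  set u : Fin (n 0) → K := fun t => f.coeff (e.symm t) with hu
  set M : Matrix (Fin (n 0)) (Fin (n 0)) K := (Matrix.vandermonde v).transpose with hM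
  have hmul : M.mulVec u = 0 := by
    funext srow
    have hc := hf (fun i => ((srow : ℕ) : ZMod (n i)))
    rw [AddMonoidAlgebra.lift_apply] at hc
    have hsf := Finsupp.sum_fintype (N := K) f.coeff
      (fun a b => b • (chiF (n := n) ζ hζ.pow_eq_one
        (fun i => ((srow : ℕ) : ZMod (n i)))) (Multiplicative.ofAdd a))
      (fun a => zero_smul K _)
    rw [hsf] at hc
    have hterm : ∀ g : ∀ i, ZMod (n i),
        f.coeff g • chiF (n := n) ζ hζ.pow_eq_one (fun i => ((srow : ℕ) : ZMod (n i)))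
          (Multiplicative.ofAdd g) = f.coeff g * (x g) ^ (srow : ℕ) := by
      intro g
      rw [chiF_apply, smul_eq_mul]
      congr 1
      have h1 : ((((srow : ℕ) : ZMod (n 0))) * g 0).val =
          ((srow : ℕ) * (g 0).val) % n 0 := by
        rw [ZMod.val_mul, ZMod.val_natCast, Nat.mod_mul_mod]
      rw [h1, pow_mod_eq hζ.pow_eq_one, mul_comm (srow : ℕ) ((g 0).val), pow_mul]
    rw [Finset.sum_congr rfl (fun g _ => hterm g)] at hc
    have hre : ∑ t : Fin (n 0), f.coeff (e.symm t) * (x (e.symm t)) ^ (srow : ℕ) =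
        ∑ g : ∀ i, ZMod (n i), f.coeff g * (x g) ^ (srow : ℕ) :=
      Equiv.sum_comp e.symm (fun g => f.coeff g * (x g) ^ (srow : ℕ))
    show ∑ t, M srow t * u t = 0
    have : ∀ t, M srow t * u t = f.coeff (e.symm t) * (x (e.symm t)) ^ (srow : ℕ) := by
      intro t
      show v t ^ (srow : ℕ) * u t = _
      rw [hu, hv]
      ring
    rw [Finset.sum_congr rfl (fun t _ => this t), hre, hc]
  have hdet : M.det ≠ 0 := by
    rw [hM, Matrix.det_transpose, Matrix.det_vandermonde]
    rw [Finset.prod_ne_zero_iff]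
    intro i _
    rw [Finset.prod_ne_zero_iff]
    intro j hj
    rw [Finset.mem_Ioi] at hj
    exact sub_ne_zero.mpr (fun hc => absurd (hvinj hc) (ne_of_gt hj))
  have hu0 := Matrix.eq_zero_of_mulVec_eq_zero hdet hmul
  ext g
  have := congrFun hu0 (e g)
  rw [hu] at this
  simp only [Equiv.symm_apply_apply] at this
  exact this

theorem ddG_le_cyclic [IsAlgClosed K] [CharZero K] (hn : ∀ i, 1 ≤ n i) :
    dd K (∀ i, ZMod (n i)) ≤ ((n 0 - 1 : ℕ) : ℕ∞) := by
  classical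
  haveI : ∀ i, NeZero (n i) := fun i => ⟨by have := hn i; omega⟩
  rw [dd_def]
  apply sSup_le
  rintro nn ⟨ℓ, rfl, s, hs⟩
  refine Nat.cast_le.mpr ?_
  by_contra hgt
  push_neg at hgt
  have hNle : n 0 ≤ ℓ := by have := hn 0; omega
  obtain ⟨ζ, hζroot⟩ := IsAlgClosed.exists_root (Polynomial.cyclotomic (n 0) K)
    (Polynomial.degree_cyclotomic_pos (n 0) K (by have := hn 0; omega)).ne'
  haveI : NeZero ((n 0 : ℕ) : K) := ⟨Nat.cast_ne_zero.mpr (by have := hn 0; omega)⟩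
  have hζ : IsPrimitiveRoot ζ (n 0) := Polynomial.isRoot_cyclotomic_iff.mp hζroot
  have hζ' : IsPrimitiveRoot ζ (n 0) := hζ
  have hζne : ζ ≠ 0 := hζ'.ne_zero (by have := hn 0; omega)
  have hcardG : Fintype.card (∀ i, ZMod (n i)) = n 0 := by
    rw [Fintype.card_pi, Fin.prod_univ_one, ZMod.card]
  obtain ⟨ι⟩ : Nonempty ((∀ i, ZMod (n i)) ↪ Fin ℓ) :=
    Function.Embedding.nonempty_of_card_le (by rw [hcardG, Fintype.card_fin]; exact hNle)
  set a : Fin ℓ → K := fun j =>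
    if h : ∃ c : ∀ i, ZMod (n i), ι c = j
    then ζ ^ (((Classical.choose h) 0 * (s j) 0).val) else 1 with ha
  have hane : ∀ j, a j ≠ 0 := by
    intro j
    simp only [ha]
    by_cases h : ∃ c : ∀ i, ZMod (n i), ι c = j
    · rw [dif_pos h]; exact pow_ne_zero _ hζne
    · rw [dif_neg h]; exact one_ne_zero
  apply hs a hane
  -- P in VS, PhiW P = honest product
  have hfac : ∀ j, facX K (s j) (a j) = Xm K (s j) 1 - Xm K (0 : ∀ i, ZMod (n i)) (a j) :=
    fun j => facX_eq_s5 _ _ _ (eIdem_piZMod hn _)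
  have hmem : (∏ j, facX K (s j) (a j)) ∈ VS K (∀ i, ZMod (n i)) := by
    obtain ⟨ℓ', rfl⟩ : ∃ ℓ', ℓ = ℓ' + 1 := ⟨ℓ - 1, by omega⟩
    exact prod_mem_VS _ (fun j => by
      rw [hfac]; exact sub_mem_VS (Xm_mem_VS _ _) (Xm_mem_VS _ _))
  apply VS_inj hmem
  rw [map_prod]
  have hPhi : ∀ j, PhiW K (∀ i, ZMod (n i)) (facX K (s j) (a j)) =
      XG K (s j) 1 - XG K 0 (a j) := by
    intro j
    rw [hfac j, map_sub, PhiW_Xm, PhiW_Xm]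
  rw [Finset.prod_congr rfl (fun j _ => hPhi j)]
  -- kill by characters
  apply char_sep hn hζ'
  intro c
  rw [map_prod]
  apply Finset.prod_eq_zero (Finset.mem_univ (ι c))
  rw [map_sub]
  have h1 : (AddMonoidAlgebra.lift K K (∀ i, ZMod (n i)))
      (chiF (n := n) ζ hζ'.pow_eq_one c) (XG K (s (ι c)) 1) =
      ζ ^ ((c 0 * (s (ι c)) 0).val) := by
    rw [show XG K (s (ι c)) (1 : K) = AddMonoidAlgebra.single (s (ι c)) (1 : K) from rfl,
      AddMonoidAlgebra.lift_single, chiF_apply, one_smul]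
  have h2 : (AddMonoidAlgebra.lift K K (∀ i, ZMod (n i)))
      (chiF (n := n) ζ hζ'.pow_eq_one c) (XG K (0 : ∀ i, ZMod (n i)) (a (ι c))) =
      a (ι c) := by
    rw [show XG K (0 : ∀ i, ZMod (n i)) (a (ι c)) =
        AddMonoidAlgebra.single (0 : ∀ i, ZMod (n i)) (a (ι c)) from rfl,
      AddMonoidAlgebra.lift_single, chiF_apply, smul_eq_mul]
    have : ((c 0 * (0 : ∀ i, ZMod (n i)) 0).val) = 0 := by
      rw [show ((0 : ∀ i, ZMod (n i)) 0) = 0 from rfl, mul_zero, ZMod.val_zero]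
    rw [this, pow_zero, mul_one]
  rw [h1, h2]
  have h3 : a (ι c) = ζ ^ ((c 0 * (s (ι c)) 0).val) := by
    simp only [ha]
    have hex : ∃ c' : ∀ i, ZMod (n i), ι c' = ι c := ⟨c, rfl⟩
    rw [dif_pos hex]
    have : Classical.choose hex = c := ι.injective (Classical.choose_spec hex)
    rw [this]
  rw [h3, sub_self]

theorem davG_eq_cyclic (hn : ∀ i, 1 ≤ n i) :
    DavG (∀ i, ZMod (n i)) = ((n 0 : ℕ) : ℕ∞) := by
  classical
  haveI : ∀ i, NeZero (n i) := fun i => ⟨by have := hn i; omega⟩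
  apply le_antisymm
  · have h := davG_le_card (G := ∀ i, ZMod (n i))
    rwa [show Fintype.card (∀ i, ZMod (n i)) = n 0 from by
      rw [Fintype.card_pi, Fin.prod_univ_one, ZMod.card]] at h
  · have h := davG_ge (n := n) hn
    rwa [show (∑ i, (n i - 1)) + 1 = n 0 from by
      rw [Fin.sum_univ_one]; have := hn 0; omega] at h

theorem ddG_eq_cyclic [IsAlgClosed K] [CharZero K] (hn : ∀ i, 1 ≤ n i) :
    dd K (∀ i, ZMod (n i)) = DavG (∀ i, ZMod (n i)) - 1 := by
  rw [davG_eq_cyclic hn]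
  apply le_antisymm
  · have h := ddG_le_cyclic (K := K) hn
    rwa [show ((n 0 - 1 : ℕ) : ℕ∞) = ((n 0 : ℕ) : ℕ∞) - 1 from by
      rw [show (1 : ℕ∞) = ((1 : ℕ) : ℕ∞) from rfl, ← ENat.coe_sub]] at h
  · have h := ddG_ge_dav (K := K) hn
    rwa [davG_eq_cyclic hn] at h

end Cyclic0

/-- `d(S,K)` for a direct product of finite cyclic semigroups
`C_{k_1;n_1} × ⋯ × C_{k_r;n_r}`, here indexed by `Fin (r+1)` so that there are `r+1 ≥ 1`
factors. -/
theorem stmt5 (r : ℕ) (S : Fin (r + 1) → Type*) [∀ i, AddCommSemigroup (S i)]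
    (x : ∀ i, S i) (k n : Fin (r + 1) → ℕ)
    (hper : ∀ i, IsPeriodicElem (S i) (x i))
    (hgen : ∀ i, cyc (S i) (x i) = Set.univ)
    (hidx : ∀ i, indexOf (S i) (x i) = k i)
    (hprd : ∀ i, period (S i) (x i) = n i)
    (hmono : ∀ i j : Fin (r + 1), i ≤ j → k i ≤ k j)
    (K : Type*) [Field K]
    (hK : (IsAlgClosed K ∧ CharZero K) ∨
      ∃ p : ℕ, p.Prime ∧ CharP K p ∧ ∃ t : ℕ, (∏ i, n i) = p ^ t) :
    dd K (∀ i, S i) = max ((k (Fin.last r) : ℕ∞) - 1) (dd K (∀ i, ZMod (n i))) ∧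
    dd K (∀ i, S i) ≥ max ((k (Fin.last r) : ℕ∞) - 1) (DavG (∀ i, ZMod (n i)) - 1) ∧
    ((r = 0 ∨ ∃ p : ℕ, p.Prime ∧ CharP K p ∧ ∃ t : ℕ, (∏ i, n i) = p ^ t) →
      dd K (∀ i, S i) = max ((k (Fin.last r) : ℕ∞) - 1) (DavG (∀ i, ZMod (n i)) - 1)) := by
  have cm : ∀ i, CycModel (S i) (x i) (k i) (n i) :=
    fun i => cycModel_of (hper i) (hidx i) (hprd i)
  have hmx : ∀ i, k i ≤ k (Fin.last r) := fun i => hmono i (Fin.last r) (Fin.le_last i)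
  have hn : ∀ i, 1 ≤ n i := fun i => (cm i).hν
  have hc1 := clause1 (K := K) cm hgen hmx
  refine ⟨hc1, ?_, ?_⟩
  · rw [hc1]
    exact max_le_max (le_refl _) (ddG_ge_dav (K := K) hn)
  · intro h3
    have hcharp : (∃ p : ℕ, p.Prime ∧ CharP K p ∧ ∃ t : ℕ, (∏ i, n i) = p ^ t) →
        dd K (∀ i, S i) =
          max ((k (Fin.last r) : ℕ∞) - 1) (DavG (∀ i, ZMod (n i)) - 1) := by
      rintro ⟨p, hp, hcp, t, hpt⟩
      haveI := hcp
      have hpow : ∀ i, ∃ t' : ℕ, n i = p ^ t' := by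
        intro i
        have hdvd : n i ∣ p ^ t := hpt ▸ Finset.dvd_prod_of_mem n (Finset.mem_univ i)
        obtain ⟨m, _, hm⟩ := (Nat.dvd_prime_pow hp).mp hdvd
        exact ⟨m, hm⟩
      rw [hc1, ddG_eq_charp hn hp hpow]
    rcases h3 with hr0 | hcp
    · rcases hK with ⟨halg, hch0⟩ | hcp
      · subst hr0
        haveI := halg
        haveI := hch0
        rw [hc1]
        have hcyc := ddG_eq_cyclic (K := K) (n := n) hn
        exact congrArg (max ((k (Fin.last 0) : ℕ∞) - 1)) hcyc
      · exact hcharp hcp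
    · exact hcharp hcp

end ZS
end
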